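/- arXiv:1102.4226 — 4 statements merged into one kernel-verified Lean document; each statement's English description precedes it below -/
import Mathlib

section
/- Define a partial order on the set S of all permutations of all finite sizes by σ ≤ τ if σ occurs as a classical pattern in τ. The incidence-algebra element P defined by P(σ, τ) = (number of occurrences of σ in τ) is invertible, and its inverse is given by P⁻¹(σ, τ) = (-1)^{|τ|-|σ|} P(σ, τ). -/
open Finset

/-- Number of occurrences of the classical pattern `σ` in `τ`: subsequences of `τ`
order-isomorphic to `σ`. -/
def occ {k n : ℕ} (σ : Equiv.Perm (Fin k)) (τ : Equiv.Perm (Fin n)) : ℕ :=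
  (univ.filter fun f : Fin k → Fin n =>
    (∀ i j : Fin k, i < j → f i < f j) ∧
    (∀ i j : Fin k, σ i < σ j ↔ τ (f i) < τ (f j))).card

/-- The set `S = ∪_{n≥0} S_n` of all permutations of all finite sizes. -/
def Perms := Σ n : ℕ, Equiv.Perm (Fin n)

instance : DecidableEq Perms := by unfold Perms; infer_instance

/-- The incidence algebra element `P(σ, τ) = #occurrences of σ in τ` (σ ≤ τ in the
pattern-containment order iff `P(σ,τ) > 0`). -/
def P (σ τ : Perms) : ℤ := occ σ.2 τ.2

namespace PatInv

/-- The finset of occurrences of `σ` in `τ`. -/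
def E {k n : ℕ} (σ : Equiv.Perm (Fin k)) (τ : Equiv.Perm (Fin n)) :
    Finset (Fin k → Fin n) :=
  univ.filter fun f : Fin k → Fin n =>
    (∀ i j : Fin k, i < j → f i < f j) ∧
    (∀ i j : Fin k, σ i < σ j ↔ τ (f i) < τ (f j))

lemma occ_eq {k n : ℕ} (σ : Equiv.Perm (Fin k)) (τ : Equiv.Perm (Fin n)) :
    occ σ τ = (E σ τ).card := rfl

lemma mem_E {k n : ℕ} {σ : Equiv.Perm (Fin k)} {τ : Equiv.Perm (Fin n)}
    {f : Fin k → Fin n} :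
    f ∈ E σ τ ↔ StrictMono f ∧ (∀ i j : Fin k, σ i < σ j ↔ τ (f i) < τ (f j)) := by
  simp only [E, mem_filter, mem_univ, true_and]
  exact Iff.rfl

lemma card_image_u {m n : ℕ} {u : Fin m → Fin n} (hu : Function.Injective u) :
    (image u (univ : Finset (Fin m))).card = m := by
  rw [card_image_of_injective _ hu, card_univ, Fintype.card_fin]

/-- The "pattern" of an injective tuple `u`: the permutation of `Fin m` with the same
relative order. -/
noncomputable def rankPerm {m n : ℕ} (u : Fin m → Fin n) (hu : Function.Injective u) :
    Equiv.Perm (Fin m) :=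
  Equiv.ofBijective
    (fun i => ((image u univ).orderIsoOfFin (card_image_u hu)).symm
        ⟨u i, mem_image_of_mem u (mem_univ i)⟩)
    (Finite.injective_iff_bijective.mp fun i j hij => hu (by
      have := congrArg (Subtype.val ∘ ((image u univ).orderIsoOfFin (card_image_u hu))) hij
      simpa using this))

lemma rankPerm_lt_iff {m n : ℕ} (u : Fin m → Fin n) (hu : Function.Injective u)
    (i j : Fin m) : rankPerm u hu i < rankPerm u hu j ↔ u i < u j := by
  show ((image u univ).orderIsoOfFin (card_image_u hu)).symm _
      < ((image u univ).orderIsoOfFin (card_image_u hu)).symm _ ↔ _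
  rw [OrderIso.lt_iff_lt, Subtype.mk_lt_mk]

lemma perm_eq_of_lt_iff {m : ℕ} {ρ ρ' : Equiv.Perm (Fin m)}
    (h : ∀ i j, ρ i < ρ j ↔ ρ' i < ρ' j) : ρ = ρ' := by
  have hmono : StrictMono fun i => ρ (ρ'.symm i) := by
    intro a b hab
    have : ρ' (ρ'.symm a) < ρ' (ρ'.symm b) := by simpa using hab
    exact (h _ _).mpr this
  have hcard : (univ : Finset (Fin m)).card = m := by simp
  have h1 : (fun i => ρ (ρ'.symm i)) = (univ : Finset (Fin m)).orderEmbOfFin hcard :=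
    orderEmbOfFin_unique _ (fun _ => mem_univ _) hmono
  have h2 : (id : Fin m → Fin m) = (univ : Finset (Fin m)).orderEmbOfFin hcard :=
    orderEmbOfFin_unique _ (fun _ => mem_univ _) strictMono_id
  ext j
  have h3 := (congrFun h1 (ρ' j)).trans (congrFun h2 (ρ' j)).symm
  have h4 : ρ j = ρ' j := by simpa using h3
  exact congrArg Fin.val h4

lemma occ_same {n : ℕ} (σ τ : Equiv.Perm (Fin n)) :
    occ σ τ = if σ = τ then 1 else 0 := by
  have hid : ∀ f : Fin n → Fin n, StrictMono f → f = id := by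
    intro f hf
    have hcard : (univ : Finset (Fin n)).card = n := by simp
    rw [orderEmbOfFin_unique hcard (fun _ => mem_univ _) hf]
    exact (orderEmbOfFin_unique hcard (fun _ => mem_univ _) strictMono_id).symm
  rw [occ_eq]
  by_cases h : σ = τ
  · subst h
    rw [if_pos rfl]
    have : E σ σ = {id} := by
      ext f
      rw [mem_E, mem_singleton]
      constructor
      · rintro ⟨h1, _⟩; exact hid f h1
      · rintro rfl; exact ⟨fun i j hij => hij, fun i j => Iff.rfl⟩
    rw [this, card_singleton]
  · rw [if_neg h, card_eq_zero, eq_empty_iff_forall_notMem]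
    intro f hf
    obtain ⟨h1, h2⟩ := mem_E.mp hf
    have hfid := hid f h1
    subst hfid
    exact h (perm_eq_of_lt_iff h2)

lemma g_apply_f {n m : ℕ} (T : Finset (Fin n)) (hT : T.card = m) (x : Fin n) (hx : x ∈ T) :
    T.orderEmbOfFin hT ((T.orderIsoOfFin hT).symm ⟨x, hx⟩) = x := by
  rw [← coe_orderIsoOfFin_apply, OrderIso.apply_symm_apply]

lemma image_orderEmbOfFin {n m : ℕ} (T : Finset (Fin n)) (hT : T.card = m) :
    image (fun i => T.orderEmbOfFin hT i) univ = T := by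
  ext y
  simp only [mem_image, mem_univ, true_and]
  constructor
  · rintro ⟨x, rfl⟩; exact orderEmbOfFin_mem T hT x
  · intro hy
    have : y ∈ Set.range (T.orderEmbOfFin hT) := by
      rw [range_orderEmbOfFin]; exact hy
    obtain ⟨x, hx⟩ := this
    exact ⟨x, hx⟩

/-- The inverse map in the key bijection: from an occurrence `h` of `σ` in `τ` together
with a suitable `m`-set `T ⊇ range h`, produce `(ρ, f, g)`. -/
noncomputable def back {k m n : ℕ} (τ : Equiv.Perm (Fin n)) (h : Fin k → Fin n)
    (T : Finset (Fin n)) (hT : T.card = m) (hsub : ∀ i, h i ∈ T) :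
    Σ _ρ : Equiv.Perm (Fin m), (Fin k → Fin m) × (Fin m → Fin n) :=
  ⟨rankPerm (fun i => τ (T.orderEmbOfFin hT i))
      (fun i j hij => (T.orderEmbOfFin hT).injective (τ.injective hij)),
    (fun i => (T.orderIsoOfFin hT).symm ⟨h i, hsub i⟩,
     fun i => T.orderEmbOfFin hT i)⟩

lemma key {k m n : ℕ} (hkm : k ≤ m) (σ : Equiv.Perm (Fin k)) (τ : Equiv.Perm (Fin n)) :
    ∑ ρ : Equiv.Perm (Fin m), occ σ ρ * occ ρ τ = occ σ τ * (n - k).choose (m - k) := by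
  classical
  have hA : ∑ ρ : Equiv.Perm (Fin m), occ σ ρ * occ ρ τ =
      ((univ : Finset (Equiv.Perm (Fin m))).sigma fun ρ => (E σ ρ) ×ˢ (E ρ τ)).card := by
    rw [card_sigma]
    simp [occ_eq, card_product]
  have hB : ((E σ τ).sigma fun h =>
        ((univ : Finset (Fin n)) \ image h univ).powersetCard (m - k)).card =
      occ σ τ * (n - k).choose (m - k) := by
    rw [card_sigma]
    rw [Finset.sum_congr rfl (fun h hh => ?_), sum_const, smul_eq_mul, occ_eq]
    rw [card_powersetCard, card_sdiff_of_subset (subset_univ _),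
      card_image_u (mem_E.mp hh).1.injective, card_univ, Fintype.card_fin]
  rw [hA, ← hB]
  refine card_bij'
    (fun a _ => ⟨a.2.2 ∘ a.2.1, image a.2.2 univ \ image (a.2.2 ∘ a.2.1) univ⟩)
    (fun b hb => back τ b.1 (b.2 ∪ image b.1 univ)
      (by
        have hb' := mem_sigma.mp hb
        obtain ⟨hsubS, hcardS⟩ := mem_powersetCard.mp hb'.2
        have hdisj : Disjoint b.2 (image b.1 univ) :=
          disjoint_left.mpr fun x hxS hxI => (mem_sdiff.mp (hsubS hxS)).2 hxI
        rw [card_union_of_disjoint hdisj, hcardS,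
          card_image_u (mem_E.mp hb'.1).1.injective, Nat.sub_add_cancel hkm]
      )
      (fun i => mem_union_right _ (mem_image_of_mem _ (mem_univ i))))
    ?_ ?_ ?_ ?_
  · -- forward lands in B
    rintro ⟨ρ, f, g⟩ ha
    have ha' := mem_sigma.mp ha
    obtain ⟨hf, hg⟩ := mem_product.mp ha'.2
    obtain ⟨hf1, hf2⟩ := mem_E.mp hf
    obtain ⟨hg1, hg2⟩ := mem_E.mp hg
    rw [mem_sigma]
    constructor
    · exact mem_E.mpr ⟨hg1.comp hf1, fun i j => (hf2 i j).trans (hg2 (f i) (f j))⟩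
    · rw [mem_powersetCard]
      have hsub : image (g ∘ f) univ ⊆ image g univ := by
        rw [← image_image]
        exact image_subset_image (subset_univ _)
      constructor
      · exact sdiff_subset_sdiff (subset_univ _) le_rfl
      · rw [card_sdiff_of_subset hsub, card_image_u hg1.injective,
          card_image_u (hg1.comp hf1).injective]
  · -- backward lands in A
    rintro ⟨h, S⟩ hb
    have hb' := mem_sigma.mp hb
    obtain ⟨hh1, hh2⟩ := mem_E.mp hb'.1
    simp only [back]
    rw [mem_sigma]
    refine ⟨mem_univ _, mem_product.mpr ⟨?_, ?_⟩⟩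
    · refine mem_E.mpr ⟨?_, ?_⟩
      · intro i j hij
        exact (OrderIso.lt_iff_lt _).mpr (Subtype.mk_lt_mk.mpr (hh1 hij))
      · intro i j
        dsimp only
        rw [hh2 i j]
        refine Iff.trans ?_ (rankPerm_lt_iff _ _ _ _).symm
        rw [g_apply_f, g_apply_f]
    · refine mem_E.mpr ⟨fun a b hab => (orderEmbOfFin _ _).strictMono hab, fun i j => ?_⟩
      dsimp only
      exact rankPerm_lt_iff _ _ i j
  · -- left inverse
    rintro ⟨ρ, f, g⟩ ha
    have ha' := mem_sigma.mp ha
    obtain ⟨hf, hg⟩ := mem_product.mp ha'.2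
    obtain ⟨hf1, hf2⟩ := mem_E.mp hf
    obtain ⟨hg1, hg2⟩ := mem_E.mp hg
    have hsub : image (g ∘ f) univ ⊆ image g univ := by
      rw [← image_image]
      exact image_subset_image (subset_univ _)
    have hTeq : (image g univ \ image (g ∘ f) univ) ∪ image (g ∘ f) univ = image g univ :=
      sdiff_union_of_subset hsub
    have hT : ((image g univ \ image (g ∘ f) univ) ∪ image (g ∘ f) univ).card = m := by
      rw [hTeq, card_image_u hg1.injective]
    have hgeq : (fun i => ((image g univ \ image (g ∘ f) univ) ∪
        image (g ∘ f) univ).orderEmbOfFin hT i) = g := by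
      refine (orderEmbOfFin_unique hT (fun x => ?_) hg1).symm
      rw [hTeq]
      exact mem_image_of_mem g (mem_univ x)
    simp only [back]
    refine Sigma.ext ?_ (heq_of_eq (Prod.ext ?_ ?_))
    · refine perm_eq_of_lt_iff fun i j => ?_
      dsimp only
      refine (rankPerm_lt_iff _ _ i j).trans ?_
      rw [congrFun hgeq i, congrFun hgeq j]
      exact (hg2 i j).symm
    · funext i
      rw [OrderIso.symm_apply_eq]
      exact Subtype.ext (congrFun hgeq (f i)).symm
    · exact hgeq
  · -- right inverse
    rintro ⟨h, S⟩ hb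
    have hb' := mem_sigma.mp hb
    obtain ⟨hh1, hh2⟩ := mem_E.mp hb'.1
    obtain ⟨hsubS, hcardS⟩ := mem_powersetCard.mp hb'.2
    have hdisj : Disjoint S (image h univ) :=
      disjoint_left.mpr fun x hxS hxI => (mem_sdiff.mp (hsubS hxS)).2 hxI
    have hT : (S ∪ image h univ).card = m := by
      rw [card_union_of_disjoint hdisj, hcardS, card_image_u hh1.injective,
        Nat.sub_add_cancel hkm]
    simp only [back]
    have hcomp : ((fun i => (S ∪ image h univ).orderEmbOfFin hT i) ∘
        (fun i => ((S ∪ image h univ).orderIsoOfFin hT).symm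
          ⟨h i, mem_union_right _ (mem_image_of_mem _ (mem_univ i))⟩)) = h := by
      funext i
      exact g_apply_f _ hT (h i) _
    refine Sigma.ext ?_ (heq_of_eq ?_)
    · exact hcomp
    · show image _ univ \ image _ univ = S
      rw [hcomp, image_orderEmbOfFin, union_sdiff_right,
        sdiff_eq_self_of_disjoint hdisj]

lemma alt_sum1 {k n : ℕ} (hkn : k ≤ n) :
    (∑ m ∈ Icc k n, (-1 : ℤ) ^ (n - m) * ((n - k).choose (m - k) : ℤ)) =
      if k = n then 1 else 0 := by
  rw [← Finset.Ico_add_one_right_eq_Icc, Finset.sum_Ico_eq_sum_range]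
  have hN : n + 1 - k = (n - k) + 1 := by omega
  rw [hN]
  set N := n - k with hNdef
  have hterm : ∀ j ∈ range (N + 1),
      (-1 : ℤ) ^ (n - (k + j)) * (N.choose ((k + j) - k) : ℤ) =
        (-1 : ℤ) ^ N * ((-1 : ℤ) ^ j * (N.choose j : ℤ)) := by
    intro j hj
    have hjN : j ≤ N := by simpa using Nat.lt_succ_iff.mp (mem_range.mp hj)
    have h1 : n - (k + j) = N - j := by omega
    have h2 : (k + j) - k = j := by omega
    rw [h1, h2]
    have : (-1 : ℤ) ^ (N - j) = (-1 : ℤ) ^ N * (-1 : ℤ) ^ j := by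
      rw [← pow_add]
      have : N + j = (N - j) + 2 * j := by omega
      rw [this, pow_add, pow_mul]
      simp
    rw [this, mul_assoc]
  rw [Finset.sum_congr rfl hterm, ← Finset.mul_sum, Int.alternating_sum_range_choose]
  by_cases hN0 : N = 0
  · have : k = n := by omega
    simp [hN0, this]
  · have : ¬ k = n := by omega
    simp [hN0, this]

lemma alt_sum2 {k n : ℕ} (hkn : k ≤ n) :
    (∑ m ∈ Icc k n, (-1 : ℤ) ^ (m - k) * ((n - k).choose (m - k) : ℤ)) =
      if k = n then 1 else 0 := by
  rw [← Finset.Ico_add_one_right_eq_Icc, Finset.sum_Ico_eq_sum_range]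
  have hN : n + 1 - k = (n - k) + 1 := by omega
  rw [hN]
  set N := n - k with hNdef
  have hterm : ∀ j ∈ range (N + 1),
      (-1 : ℤ) ^ ((k + j) - k) * (N.choose ((k + j) - k) : ℤ) =
        (-1 : ℤ) ^ j * (N.choose j : ℤ) := by
    intro j _
    have h2 : (k + j) - k = j := by omega
    rw [h2]
  rw [Finset.sum_congr rfl hterm, Int.alternating_sum_range_choose]
  by_cases hN0 : N = 0
  · have : k = n := by omega
    simp [hN0, this]
  · have : ¬ k = n := by omega
    simp [hN0, this]

lemma key_int {k m n : ℕ} (hkm : k ≤ m) (σ : Equiv.Perm (Fin k)) (τ : Equiv.Perm (Fin n)) :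
    ∑ ρ : Equiv.Perm (Fin m), (occ σ ρ : ℤ) * (occ ρ τ : ℤ) =
      (occ σ τ : ℤ) * ((n - k).choose (m - k) : ℤ) := by
  exact_mod_cast congrArg (Nat.cast : ℕ → ℤ) (key hkm σ τ)

end PatInv

open PatInv in
/-- `P` is invertible in the incidence algebra of the pattern-containment poset, with
inverse `P⁻¹(σ, τ) = (-1)^{|τ|-|σ|} P(σ, τ)`: convolving `P` with this function on
either side gives the identity `δ`.  The convolution `∑_{σ ≤ ρ ≤ τ}` is written as a
sum over all permutations `ρ` of each size in `[|σ|, |τ|]`; terms with `ρ` not in the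
interval `[σ, τ]` vanish since then `P(σ,ρ) = 0` or `P(ρ,τ) = 0`. -/
theorem P_inverse (σ τ : Perms) :
    (∑ m ∈ Icc σ.1 τ.1, ∑ ρ : Equiv.Perm (Fin m),
        P σ ⟨m, ρ⟩ * ((-1 : ℤ) ^ (τ.1 - m) * P ⟨m, ρ⟩ τ)) =
      (if σ = τ then 1 else 0) ∧
    (∑ m ∈ Icc σ.1 τ.1, ∑ ρ : Equiv.Perm (Fin m),
        ((-1 : ℤ) ^ (m - σ.1) * P σ ⟨m, ρ⟩) * P ⟨m, ρ⟩ τ) =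
      (if σ = τ then 1 else 0) := by
  obtain ⟨k, s⟩ := σ
  obtain ⟨n, t⟩ := τ
  by_cases hkn : k ≤ n
  · have hfinal : (if (⟨k, s⟩ : Perms) = ⟨n, t⟩ then (1 : ℤ) else 0) =
        (occ s t : ℤ) * (if k = n then 1 else 0) := by
      by_cases h : k = n
      · subst h
        rw [if_pos rfl, occ_same, mul_one]
        by_cases hst : s = t
        · subst hst; simp
        · rw [if_neg hst, if_neg]
          · simp
          · intro hcon
            have hcon' : (⟨k, s⟩ : Σ n, Equiv.Perm (Fin n)) = ⟨k, t⟩ := hcon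
            exact hst (by simpa using hcon')
      · have hne : ¬ ((⟨k, s⟩ : Perms) = ⟨n, t⟩) := fun hcon =>
          h (congrArg Sigma.fst hcon)
        rw [if_neg h, mul_zero, if_neg hne]
    constructor
    · calc ∑ m ∈ Icc k n, ∑ ρ : Equiv.Perm (Fin m),
            P ⟨k, s⟩ ⟨m, ρ⟩ * ((-1 : ℤ) ^ (n - m) * P ⟨m, ρ⟩ ⟨n, t⟩)
          = ∑ m ∈ Icc k n,
            (occ s t : ℤ) * ((-1 : ℤ) ^ (n - m) * ((n - k).choose (m - k) : ℤ)) := by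
            refine Finset.sum_congr rfl fun m hm => ?_
            have hkm : k ≤ m := (mem_Icc.mp hm).1
            have : ∑ ρ : Equiv.Perm (Fin m),
                P ⟨k, s⟩ ⟨m, ρ⟩ * ((-1 : ℤ) ^ (n - m) * P ⟨m, ρ⟩ ⟨n, t⟩) =
                (-1 : ℤ) ^ (n - m) * ∑ ρ : Equiv.Perm (Fin m),
                  (occ s ρ : ℤ) * (occ ρ t : ℤ) := by
              rw [Finset.mul_sum]
              refine Finset.sum_congr rfl fun ρ _ => ?_
              show (occ s ρ : ℤ) * ((-1 : ℤ) ^ (n - m) * (occ ρ t : ℤ)) = _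
              ring
            rw [this, key_int hkm, ]
            ring
        _ = (occ s t : ℤ) * ∑ m ∈ Icc k n,
              (-1 : ℤ) ^ (n - m) * ((n - k).choose (m - k) : ℤ) := by
            rw [Finset.mul_sum]
        _ = (occ s t : ℤ) * (if k = n then 1 else 0) := by rw [alt_sum1 hkn]
        _ = _ := hfinal.symm
    · calc ∑ m ∈ Icc k n, ∑ ρ : Equiv.Perm (Fin m),
            ((-1 : ℤ) ^ (m - k) * P ⟨k, s⟩ ⟨m, ρ⟩) * P ⟨m, ρ⟩ ⟨n, t⟩
          = ∑ m ∈ Icc k n,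
            (occ s t : ℤ) * ((-1 : ℤ) ^ (m - k) * ((n - k).choose (m - k) : ℤ)) := by
            refine Finset.sum_congr rfl fun m hm => ?_
            have hkm : k ≤ m := (mem_Icc.mp hm).1
            have : ∑ ρ : Equiv.Perm (Fin m),
                ((-1 : ℤ) ^ (m - k) * P ⟨k, s⟩ ⟨m, ρ⟩) * P ⟨m, ρ⟩ ⟨n, t⟩ =
                (-1 : ℤ) ^ (m - k) * ∑ ρ : Equiv.Perm (Fin m),
                  (occ s ρ : ℤ) * (occ ρ t : ℤ) := by
              rw [Finset.mul_sum]
              refine Finset.sum_congr rfl fun ρ _ => ?_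
              show ((-1 : ℤ) ^ (m - k) * (occ s ρ : ℤ)) * (occ ρ t : ℤ) = _
              ring
            rw [this, key_int hkm]
            ring
        _ = (occ s t : ℤ) * ∑ m ∈ Icc k n,
              (-1 : ℤ) ^ (m - k) * ((n - k).choose (m - k) : ℤ) := by
            rw [Finset.mul_sum]
        _ = (occ s t : ℤ) * (if k = n then 1 else 0) := by rw [alt_sum2 hkn]
        _ = _ := hfinal.symm
  · have hicc : Icc k n = ∅ := by
      rw [Icc_eq_empty_iff]; omega
    have hne : ¬ ((⟨k, s⟩ : Perms) = ⟨n, t⟩) := by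
      intro hcon
      exact hkn (le_of_eq (congrArg Sigma.fst hcon))
    rw [hicc]
    simp [hne]
    exact hne
end

section
/- Reciprocity Theorem for mesh patterns: let p = (π, R) be a mesh pattern with π ∈ S_k and R ⊆ [0,k]×[0,k], and let p* = (π, R^c) where R^c = ([0,k]×[0,k]) \ R. Then for every permutation τ, p*(τ) = ∑_{σ ≤ τ} (-1)^{|π|-|σ|} · p(σ) · occ(σ, τ), where the sum is over classical patterns σ occurring in τ. Equivalently, p(τ) = ∑_{σ} (-1)^{|σ|-|π|} p*(σ) occ(σ, τ). -/
open Finset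

/-- The boundary values `α(0) = 0`, `α(m) = g(m-1)+1` (1-indexed) for `1 ≤ m ≤ k`, and
`α(k+1) = n+1`, associated to a selection `g : Fin k → Fin n` of columns (or rows). -/
def bd {k n : ℕ} (g : Fin k → Fin n) (m : ℕ) : ℕ :=
  if h : 1 ≤ m ∧ m ≤ k then (g ⟨m - 1, by omega⟩ : ℕ) + 1
  else if m = 0 then 0 else n + 1

/-- Number of occurrences of the mesh pattern `(σ, R)` in `τ`: occurrences of the
classical pattern `σ` (given by the column selection `f`) such that for every
`(i,j) ∈ R` the open region between columns `α(i), α(i+1)` and rows `β(j), β(j+1)`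
of the occurrence contains no point of the plot of `τ` (1-indexed coordinates,
with boundary conventions `0` and `n+1`). -/
def meshOcc {k n : ℕ} (σ : Equiv.Perm (Fin k)) (R : Finset (Fin (k + 1) × Fin (k + 1)))
    (τ : Equiv.Perm (Fin n)) : ℕ :=
  (univ.filter fun f : Fin k → Fin n =>
    (∀ i j : Fin k, i < j → f i < f j) ∧
    (∀ i j : Fin k, σ i < σ j ↔ τ (f i) < τ (f j)) ∧
    (∀ r ∈ R, ∀ a : Fin n,
      ¬ (bd f (r.1 : ℕ) < (a : ℕ) + 1 ∧ (a : ℕ) + 1 < bd f ((r.1 : ℕ) + 1) ∧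
         bd (fun i => τ (f (σ.symm i))) (r.2 : ℕ) < (τ a : ℕ) + 1 ∧
         (τ a : ℕ) + 1 < bd (fun i => τ (f (σ.symm i))) ((r.2 : ℕ) + 1)))).card

section helpers
variable {k n : ℕ}

def colIdx (g : Fin k → Fin n) (a : Fin n) : ℕ := (univ.filter fun i => g i < a).card

lemma colIdx_le (g : Fin k → Fin n) (a : Fin n) : colIdx g a ≤ k := by
  simpa [colIdx] using (Finset.card_filter_le univ fun i => g i < a)

lemma lt_colIdx_iff {g : Fin k → Fin n} (hg : StrictMono g) (i : Fin k) (a : Fin n) :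
    g i < a ↔ (i : ℕ) < colIdx g a := by
  simp only [colIdx]
  constructor
  · intro h
    have hsub : Finset.Iic i ⊆ univ.filter fun j => g j < a := by
      intro j hj
      simp only [Finset.mem_Iic] at hj
      simp only [Finset.mem_filter, Finset.mem_univ, true_and]
      exact lt_of_le_of_lt (hg.monotone hj) h
    have := Finset.card_le_card hsub
    rw [Fin.card_Iic] at this
    omega
  · intro h
    by_contra hlt
    have hsub : (univ.filter fun j => g j < a) ⊆ Finset.Iio i := by
      intro j hj
      simp only [Finset.mem_filter, Finset.mem_univ, true_and] at hj
      simp only [Finset.mem_Iio]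
      by_contra hji
      exact hlt (lt_of_le_of_lt (hg.monotone (not_lt.mp hji)) hj)
    have := Finset.card_le_card hsub
    rw [Fin.card_Iio] at this
    omega

lemma card_filter_val_lt {c : ℕ} (hc : c ≤ k) :
    (univ.filter fun i : Fin k => (i : ℕ) < c).card = c := by
  have : (univ.filter fun i : Fin k => (i : ℕ) < c) =
      (univ : Finset (Fin c)).map ⟨Fin.castLE hc, Fin.castLE_injective hc⟩ := by
    ext j
    simp only [Finset.mem_filter, Finset.mem_univ, true_and, Finset.mem_map,
      Function.Embedding.coeFn_mk]
    constructor
    · intro hj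
      exact ⟨⟨(j : ℕ), hj⟩, rfl⟩
    · rintro ⟨i, rfl⟩
      exact i.isLt
  rw [this, Finset.card_map, Finset.card_univ, Fintype.card_fin]

/-- The 1-dimensional region lemma. -/
lemma region_iff {g : Fin k → Fin n} (hg : StrictMono g) (a : Fin n) {c : ℕ} (hc : c ≤ k) :
    (bd g c < (a : ℕ) + 1 ∧ (a : ℕ) + 1 < bd g (c + 1)) ↔
      ((∀ i, g i ≠ a) ∧ c = colIdx g a) := by
  constructor
  · rintro ⟨h1, h2⟩
    have hlow : ∀ i : Fin k, (i : ℕ) < c → g i < a := by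
      intro i hi
      rw [bd, dif_pos ⟨by omega, hc⟩] at h1
      have hle : g i ≤ g ⟨c - 1, by omega⟩ := hg.monotone (by simp [Fin.le_def]; omega)
      rw [Fin.lt_def]
      have := Fin.le_def.mp hle
      omega
    have hhigh : ∀ i : Fin k, c ≤ (i : ℕ) → a < g i := by
      intro i hi
      have hck : c < k := lt_of_le_of_lt hi i.isLt
      rw [bd, dif_pos ⟨by omega, by omega⟩] at h2
      have hle : g ⟨c + 1 - 1, by omega⟩ ≤ g i := hg.monotone (by simp [Fin.le_def]; omega)
      rw [Fin.lt_def]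
      have := Fin.le_def.mp hle
      omega
    have key : ∀ i : Fin k, g i < a ↔ (i : ℕ) < c := by
      intro i
      constructor
      · intro hia
        by_contra hic
        exact absurd hia (asymm (hhigh i (by omega)))
      · exact hlow i
    refine ⟨fun i hi => ?_, ?_⟩
    · rcases lt_or_ge (i : ℕ) c with h | h
      · exact absurd hi (ne_of_lt (hlow i h))
      · exact absurd hi.symm (ne_of_lt (hhigh i h))
    · rw [colIdx, Finset.filter_congr (fun i _ => by rw [key i]), card_filter_val_lt hc]
  · rintro ⟨hne, rfl⟩
    constructor
    · rcases Nat.eq_zero_or_pos (colIdx g a) with h0 | h0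
      · rw [h0, bd]; simp
      · rw [bd, dif_pos ⟨h0, colIdx_le g a⟩]
        have : g ⟨colIdx g a - 1, by have := colIdx_le g a; omega⟩ < a := by
          rw [lt_colIdx_iff hg]
          simp; omega
        have := Fin.lt_def.mp this
        omega
    · rcases lt_or_eq_of_le (colIdx_le g a) with hck | hck
      · rw [bd, dif_pos ⟨by omega, by omega⟩]
        have hnot : ¬ g ⟨colIdx g a + 1 - 1, by omega⟩ < a := by
          rw [lt_colIdx_iff hg]; simp
        have hlt : a < g ⟨colIdx g a + 1 - 1, by omega⟩ :=
          lt_of_le_of_ne (not_lt.mp hnot) (fun h => hne _ h.symm)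
        have := Fin.lt_def.mp hlt
        omega
      · rw [bd, dif_neg (by omega), if_neg (by omega)]
        have := a.isLt
        omega

end helpers

section main
variable {k n : ℕ}

def Occ (σ : Equiv.Perm (Fin k)) (τ : Equiv.Perm (Fin n)) : Finset (Fin k → Fin n) :=
  univ.filter fun f => (∀ i j : Fin k, i < j → f i < f j) ∧
    (∀ i j : Fin k, σ i < σ j ↔ τ (f i) < τ (f j))

lemma occ_eq (σ : Equiv.Perm (Fin k)) (τ : Equiv.Perm (Fin n)) : occ σ τ = (Occ σ τ).card := rfl

def mbox (τ : Equiv.Perm (Fin n)) (f : Fin k → Fin n) (a : Fin n) :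
    Fin (k + 1) × Fin (k + 1) :=
  (⟨colIdx f a, Nat.lt_succ_of_le (colIdx_le f a)⟩,
   ⟨colIdx (fun i => τ (f i)) (τ a), Nat.lt_succ_of_le (colIdx_le _ _)⟩)

lemma colIdx_comp (σ : Equiv.Perm (Fin k)) (g : Fin k → Fin n) (b : Fin n) :
    colIdx (fun i => g (σ.symm i)) b = colIdx g b := by
  simp only [colIdx]
  rw [show (univ.filter fun i => g (σ.symm i) < b) =
      (univ.filter fun i => g i < b).image σ by
    ext j
    simp only [Finset.mem_filter, Finset.mem_univ, true_and, Finset.mem_image]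
    constructor
    · intro h; exact ⟨σ.symm j, h, by simp⟩
    · rintro ⟨i, hi, rfl⟩; simpa using hi]
  exact Finset.card_image_of_injective _ σ.injective

lemma strictMono_row {σ : Equiv.Perm (Fin k)} {τ : Equiv.Perm (Fin n)} {f : Fin k → Fin n}
    (h2 : ∀ i j : Fin k, σ i < σ j ↔ τ (f i) < τ (f j)) :
    StrictMono (fun i => τ (f (σ.symm i))) := by
  intro i j hij
  exact (h2 (σ.symm i) (σ.symm j)).mp (by simpa using hij)

lemma meshOcc_eq_card (σ : Equiv.Perm (Fin k)) (R : Finset (Fin (k + 1) × Fin (k + 1)))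
    (τ : Equiv.Perm (Fin n)) :
    meshOcc σ R τ =
      ((Occ σ τ).filter fun f => ∀ a : Fin n, (∀ i, f i ≠ a) → mbox τ f a ∉ R).card := by
  rw [meshOcc, Occ, Finset.filter_filter]
  congr 1
  apply Finset.filter_congr
  intro f _

  constructor
  · rintro ⟨h1, h2, h3⟩
    refine ⟨⟨h1, h2⟩, fun a hne hbox => ?_⟩
    refine h3 _ hbox a ?_
    have hm : StrictMono f := fun i j h => h1 i j h
    have hm' := strictMono_row h2
    have hcol := (region_iff hm a (c := colIdx f a) (colIdx_le f a)).mpr ⟨hne, rfl⟩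
    have hrow := (region_iff hm' (τ a) (c := colIdx (fun i => τ (f i)) (τ a))
        (colIdx_le _ _)).mpr ⟨fun i h => hne (σ.symm i) (τ.injective h),
          (colIdx_comp σ (fun i => τ (f i)) (τ a)).symm⟩
    exact ⟨hcol.1, hcol.2, hrow.1, hrow.2⟩
  · rintro ⟨⟨h1, h2⟩, h3⟩
    refine ⟨h1, h2, fun r hr a hq => ?_⟩
    have hm : StrictMono f := fun i j h => h1 i j h
    have hm' := strictMono_row h2
    have hcol := (region_iff hm a (Fin.is_le r.1)).mp ⟨hq.1, hq.2.1⟩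
    have hrow := (region_iff hm' (τ a) (Fin.is_le r.2)).mp ⟨hq.2.2.1, hq.2.2.2⟩
    have hne : ∀ i, f i ≠ a := hcol.1
    have hrbox : r = mbox τ f a := by
      have e1 : (r.1 : ℕ) = colIdx f a := hcol.2
      have e2 : (r.2 : ℕ) = colIdx (fun i => τ (f i)) (τ a) := by
        rw [hrow.2, colIdx_comp σ (fun i => τ (f i)) (τ a)]
      exact Prod.ext (Fin.ext e1) (Fin.ext e2)
    exact h3 a hne (hrbox ▸ hr)

def bad (τ : Equiv.Perm (Fin n)) (f : Fin k → Fin n) (R : Finset (Fin (k + 1) × Fin (k + 1))) :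
    Finset (Fin n) :=
  univ.filter fun a => (∀ i, f i ≠ a) ∧ mbox τ f a ∈ R

lemma meshOcc_eq_card' (σ : Equiv.Perm (Fin k)) (R : Finset (Fin (k + 1) × Fin (k + 1)))
    (τ : Equiv.Perm (Fin n)) :
    meshOcc σ R τ = ((Occ σ τ).filter fun f => bad τ f R = ∅).card := by
  rw [meshOcc_eq_card]
  congr 1
  apply Finset.filter_congr
  intro f _
  rw [Finset.eq_empty_iff_forall_notMem]
  simp only [bad, Finset.mem_filter, Finset.mem_univ, true_and, not_and]

def pattFn {m : ℕ} {α : Type*} [LinearOrder α] (v : Fin m → α) (i : Fin m) : Fin m :=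
  ⟨(univ.filter fun j => v j < v i).card, by
    have hsub : (univ.filter fun j => v j < v i) ⊆ univ.erase i := by
      intro j hj
      simp only [Finset.mem_filter, Finset.mem_univ, true_and] at hj
      exact Finset.mem_erase.mpr ⟨fun h => absurd hj (by rw [h]; exact lt_irrefl _), mem_univ j⟩
    have := Finset.card_le_card hsub
    rw [Finset.card_erase_of_mem (mem_univ i), Finset.card_univ, Fintype.card_fin] at this
    have : 0 < m := i.pos
    omega⟩

lemma pattFn_lt {m : ℕ} {α : Type*} [LinearOrder α] (v : Fin m → α) {i j : Fin m}
    (h : v i < v j) : pattFn v i < pattFn v j := by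
  rw [Fin.lt_def]
  show (univ.filter fun x => v x < v i).card < (univ.filter fun x => v x < v j).card
  apply Finset.card_lt_card
  constructor
  · intro x hx
    simp only [Finset.mem_filter, Finset.mem_univ, true_and] at hx ⊢
    exact lt_trans hx h
  · intro hsub
    have := hsub (Finset.mem_filter.mpr ⟨mem_univ i, h⟩)
    simp at this

noncomputable def patt {m : ℕ} {α : Type*} [LinearOrder α] (v : Fin m → α) (hv : Function.Injective v) :
    Equiv.Perm (Fin m) :=
  Equiv.ofBijective (pattFn v) (Finite.injective_iff_bijective.mp (by
    intro i j hij
    by_contra hne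
    rcases lt_or_gt_of_ne (fun h : v i = v j => hne (hv h)) with h | h
    · exact absurd hij (ne_of_lt (pattFn_lt v h))
    · exact absurd hij.symm (ne_of_lt (pattFn_lt v h))))

lemma patt_lt_iff {m : ℕ} {α : Type*} [LinearOrder α] (v : Fin m → α) (hv : Function.Injective v)
    (i j : Fin m) : patt v hv i < patt v hv j ↔ v i < v j := by
  constructor
  · intro h
    rcases lt_trichotomy (v i) (v j) with h' | h' | h'
    · exact h'
    · rw [hv h'] at h; exact absurd h (lt_irrefl _)
    · exact absurd h (asymm (pattFn_lt v h'))
  · exact pattFn_lt v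

lemma patt_apply {m : ℕ} {α : Type*} [LinearOrder α] (v : Fin m → α) (hv : Function.Injective v)
    (i : Fin m) : ((patt v hv i : Fin m) : ℕ) = (univ.filter fun j => v j < v i).card := rfl

lemma mem_Occ {σ : Equiv.Perm (Fin k)} {τ : Equiv.Perm (Fin n)} {f : Fin k → Fin n} :
    f ∈ Occ σ τ ↔ ((∀ i j : Fin k, i < j → f i < f j) ∧
      (∀ i j : Fin k, σ i < σ j ↔ τ (f i) < τ (f j))) := by
  simp [Occ]

lemma mem_bad {τ : Equiv.Perm (Fin n)} {f : Fin k → Fin n}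
    {R : Finset (Fin (k + 1) × Fin (k + 1))} {a : Fin n} :
    a ∈ bad τ f R ↔ ((∀ i, f i ≠ a) ∧ mbox τ f a ∈ R) := by
  simp [bad]

lemma mbox_comp {m : ℕ} (τ : Equiv.Perm (Fin n)) (ρ : Equiv.Perm (Fin m)) (h : Fin k → Fin m)
    (g : Fin m → Fin n) (hg : StrictMono g)
    (hpat : ∀ i j : Fin m, ρ i < ρ j ↔ τ (g i) < τ (g j)) (s : Fin m) :
    mbox τ (fun i => g (h i)) (g s) = mbox ρ h s := by
  unfold mbox
  refine Prod.ext (Fin.ext ?_) (Fin.ext ?_)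
  · simp only [colIdx]
    congr 1
    apply Finset.filter_congr
    intro i _
    simp [hg.lt_iff_lt]
  · simp only [colIdx]
    congr 1
    apply Finset.filter_congr
    intro i _
    simp [(hpat (h i) s).symm]

lemma T_card {m : ℕ} {f : Fin k → Fin n} {S : Finset (Fin n)} (hf : Function.Injective f)
    (hd : ∀ a ∈ S, ∀ i, f i ≠ a) (hc : S.card + k = m) : (S ∪ univ.image f).card = m := by
  rw [Finset.card_union_of_disjoint, Finset.card_image_of_injective _ hf, Finset.card_univ,
    Fintype.card_fin]
  · exact hc
  · rw [Finset.disjoint_left]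
    intro a ha him
    obtain ⟨i, -, rfl⟩ := Finset.mem_image.mp him
    exact hd _ ha i rfl

noncomputable def fwd {m : ℕ} (τ : Equiv.Perm (Fin n)) (f : Fin k → Fin n) (S : Finset (Fin n))
    (hT : (S ∪ univ.image f).card = m) :
    Equiv.Perm (Fin m) × (Fin k → Fin m) × (Fin m → Fin n) :=
  let e := (S ∪ univ.image f).orderIsoOfFin hT
  ⟨patt (fun i => τ (e i : Fin n))
      (fun i j hij => e.injective (Subtype.coe_injective (τ.injective hij))),
   fun i => e.symm ⟨f i, Finset.mem_union_right _ (Finset.mem_image_of_mem f (mem_univ i))⟩,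
   fun i => (e i : Fin n)⟩

def bwd {m : ℕ} (y : Equiv.Perm (Fin m) × (Fin k → Fin m) × (Fin m → Fin n)) :
    (Fin k → Fin n) × Finset (Fin n) :=
  (fun i => y.2.2 (y.2.1 i), (univ.filter fun s => ∀ i, y.2.1 i ≠ s).image y.2.2)


lemma fwd_g_strictMono {m : ℕ} (τ : Equiv.Perm (Fin n)) (f : Fin k → Fin n) (S : Finset (Fin n))
    (hT : (S ∪ univ.image f).card = m) : StrictMono (fwd τ f S hT).2.2 := by
  intro i j hij
  exact Subtype.coe_lt_coe.mpr (((S ∪ univ.image f).orderIsoOfFin hT).strictMono hij)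

lemma fwd_gh (τ : Equiv.Perm (Fin n)) (f : Fin k → Fin n) (S : Finset (Fin n)) {m : ℕ}
    (hT : (S ∪ univ.image f).card = m) (i : Fin k) : (fwd τ f S hT).2.2 ((fwd τ f S hT).2.1 i) = f i := by
  simp only [fwd]
  rw [OrderIso.apply_symm_apply]

lemma fwd_patt (τ : Equiv.Perm (Fin n)) (f : Fin k → Fin n) (S : Finset (Fin n)) {m : ℕ}
    (hT : (S ∪ univ.image f).card = m) (i j : Fin m) :
    (fwd τ f S hT).1 i < (fwd τ f S hT).1 j ↔ τ ((fwd τ f S hT).2.2 i) < τ ((fwd τ f S hT).2.2 j) := by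
  simp only [fwd]
  exact patt_lt_iff _ _ i j

lemma fwd_g_mem_S (τ : Equiv.Perm (Fin n)) (f : Fin k → Fin n) (S : Finset (Fin n)) {m : ℕ}
    (hT : (S ∪ univ.image f).card = m) (s : Fin m)
    (hs : ∀ i, (fwd τ f S hT).2.1 i ≠ s) : (fwd τ f S hT).2.2 s ∈ S := by
  have hmem : (fwd τ f S hT).2.2 s ∈ S ∪ univ.image f :=
    (((S ∪ univ.image f).orderIsoOfFin hT) s).2
  rcases Finset.mem_union.mp hmem with h | h
  · exact h
  · exfalso
    obtain ⟨i, -, hfi⟩ := Finset.mem_image.mp h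
    apply hs i
    apply (fwd_g_strictMono τ f S hT).injective
    rw [fwd_gh]
    exact hfi

lemma fwd_spec (σ : Equiv.Perm (Fin k)) (R : Finset (Fin (k + 1) × Fin (k + 1)))
    (τ : Equiv.Perm (Fin n)) {f : Fin k → Fin n} {S : Finset (Fin n)} {m : ℕ}
    (hT : (S ∪ univ.image f).card = m) (hf : f ∈ Occ σ τ) (hS : S ⊆ bad τ f Rᶜ) :
    ((fwd τ f S hT).2.1 ∈ Occ σ (fwd τ f S hT).1 ∧
      bad (fwd τ f S hT).1 (fwd τ f S hT).2.1 R = ∅) ∧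
      (fwd τ f S hT).2.2 ∈ Occ (fwd τ f S hT).1 τ := by
  obtain ⟨hmono, hpat⟩ := mem_Occ.mp hf
  set ρ := (fwd τ f S hT).1 with hρ
  set h := (fwd τ f S hT).2.1 with hh
  set g := (fwd τ f S hT).2.2 with hg
  have hgmono : StrictMono g := fwd_g_strictMono τ f S hT
  have hgh : ∀ i, g (h i) = f i := fwd_gh τ f S hT
  have hpatg : ∀ i j : Fin m, ρ i < ρ j ↔ τ (g i) < τ (g j) := fwd_patt τ f S hT
  refine ⟨⟨mem_Occ.mpr ⟨?_, ?_⟩, ?_⟩, mem_Occ.mpr ⟨fun i j hij => hgmono hij, hpatg⟩⟩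
  · intro i j hij
    have : g (h i) < g (h j) := by rw [hgh, hgh]; exact hmono i j hij
    exact hgmono.lt_iff_lt.mp this
  · intro i j
    rw [hpat i j, ← hgh i, ← hgh j, ← hpatg]
  · rw [Finset.eq_empty_iff_forall_notMem]
    intro s hs
    obtain ⟨hne, hbox⟩ := mem_bad.mp hs
    have hgs : g s ∈ S := fwd_g_mem_S τ f S hT s hne
    have hbox' : mbox τ f (g s) ∈ Rᶜ := (mem_bad.mp (hS hgs)).2
    rw [Finset.mem_compl] at hbox'
    apply hbox'
    have : mbox τ f (g s) = mbox ρ h s := by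
      have hfg : f = fun i => g (h i) := funext fun i => (hgh i).symm
      rw [hfg]
      exact mbox_comp τ ρ h g hgmono hpatg s
    rw [this]
    exact hbox

lemma bwd_spec (σ : Equiv.Perm (Fin k)) (R : Finset (Fin (k + 1) × Fin (k + 1)))
    (τ : Equiv.Perm (Fin n)) {m : ℕ}
    (y : Equiv.Perm (Fin m) × (Fin k → Fin m) × (Fin m → Fin n))
    (hy : (y.2.1 ∈ Occ σ y.1 ∧ bad y.1 y.2.1 R = ∅) ∧ y.2.2 ∈ Occ y.1 τ) :
    ((bwd y).1 ∈ Occ σ τ ∧ (bwd y).2 ⊆ bad τ (bwd y).1 Rᶜ) ∧ (bwd y).2.card + k = m := by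
  obtain ⟨⟨hh, hbad⟩, hgocc⟩ := hy
  obtain ⟨ρ, h, g⟩ := y
  simp only at hh hbad hgocc
  obtain ⟨hhmono, hhpat⟩ := mem_Occ.mp hh
  obtain ⟨hgmono', hgpat⟩ := mem_Occ.mp hgocc
  have hgmono : StrictMono g := fun i j hij => hgmono' i j hij
  have hhmono' : StrictMono h := fun i j hij => hhmono i j hij
  simp only [bwd]
  have hfmem : (fun i => g (h i)) ∈ Occ σ τ := by
    refine mem_Occ.mpr ⟨fun i j hij => hgmono (hhmono i j hij), fun i j => ?_⟩
    rw [hhpat i j, hgpat (h i) (h j)]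
  refine ⟨⟨hfmem, ?_⟩, ?_⟩
  · intro a ha
    obtain ⟨s, hsmem, rfl⟩ := Finset.mem_image.mp ha
    have hs : ∀ i, h i ≠ s := by
      have := Finset.mem_filter.mp hsmem
      exact this.2
    refine mem_bad.mpr ⟨fun i hfi => hs i (hgmono.injective hfi), ?_⟩
    rw [Finset.mem_compl]
    have hbox : mbox τ (fun i => g (h i)) (g s) = mbox ρ h s :=
      mbox_comp τ ρ h g hgmono hgpat s
    rw [hbox]
    intro hR
    have : s ∈ bad ρ h R := mem_bad.mpr ⟨hs, hR⟩
    rw [hbad] at this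
    exact absurd this (Finset.notMem_empty s)
  · have hcard1 : ((univ.filter fun s => ∀ i, h i ≠ s).image g).card =
        (univ.filter fun s : Fin m => ∀ i, h i ≠ s).card :=
      Finset.card_image_of_injective _ hgmono.injective
    have hfilter : (univ.filter fun s : Fin m => ∀ i, h i ≠ s) = univ \ univ.image h := by
      ext s
      simp [Finset.mem_sdiff, Finset.mem_image, eq_comm]
    have hkm : k ≤ m := by
      have := Fintype.card_le_of_injective h hhmono'.injective
      simpa using this
    rw [hcard1, hfilter, Finset.card_sdiff_of_subset (Finset.subset_univ _),
      Finset.card_image_of_injective _ hhmono'.injective]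
    simp only [Finset.card_univ, Fintype.card_fin]
    omega


lemma card_filter_lt_perm {m : ℕ} (ρ : Equiv.Perm (Fin m)) (i : Fin m) :
    (univ.filter fun j => ρ j < ρ i).card = (ρ i : ℕ) := by
  have : (univ.filter fun j => ρ j < ρ i) = (Finset.Iio (ρ i)).image ρ.symm := by
    ext j
    simp only [Finset.mem_filter, Finset.mem_univ, true_and, Finset.mem_image, Finset.mem_Iio]
    constructor
    · intro hj; exact ⟨ρ j, hj, by simp⟩
    · rintro ⟨x, hx, rfl⟩; simpa using hx
  rw [this, Finset.card_image_of_injective _ ρ.symm.injective, Fin.card_Iio]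

lemma bwd_fwd (τ : Equiv.Perm (Fin n)) {f : Fin k → Fin n} {S : Finset (Fin n)} {m : ℕ}
    (hT : (S ∪ univ.image f).card = m) (hd : ∀ a ∈ S, ∀ i, f i ≠ a) :
    bwd (fwd τ f S hT) = (f, S) := by
  refine Prod.ext (funext fun i => fwd_gh τ f S hT i) ?_
  show ((univ.filter fun s => ∀ i, (fwd τ f S hT).2.1 i ≠ s).image (fwd τ f S hT).2.2) = S
  ext a
  constructor
  · intro ha
    obtain ⟨s, hsfil, rfl⟩ := Finset.mem_image.mp ha
    exact fwd_g_mem_S τ f S hT s (Finset.mem_filter.mp hsfil).2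
  · intro ha
    have haT : a ∈ S ∪ univ.image f := Finset.mem_union_left _ ha
    refine Finset.mem_image.mpr ⟨((S ∪ univ.image f).orderIsoOfFin hT).symm ⟨a, haT⟩, ?_, ?_⟩
    · refine Finset.mem_filter.mpr ⟨mem_univ _, fun i hi => ?_⟩
      have : f i = a := by
        have := congrArg (fun z => (((S ∪ univ.image f).orderIsoOfFin hT) z : Fin n)) hi
        simpa [fwd, OrderIso.apply_symm_apply] using this
      exact hd a ha i this
    · show ((_ : Finset (Fin n)).orderIsoOfFin hT _ : Fin n) = a
      rw [OrderIso.apply_symm_apply]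

lemma fwd_bwd (σ : Equiv.Perm (Fin k)) (R : Finset (Fin (k + 1) × Fin (k + 1)))
    (τ : Equiv.Perm (Fin n)) {m : ℕ}
    (y : Equiv.Perm (Fin m) × (Fin k → Fin m) × (Fin m → Fin n))
    (hy : (y.2.1 ∈ Occ σ y.1 ∧ bad y.1 y.2.1 R = ∅) ∧ y.2.2 ∈ Occ y.1 τ)
    (hT : ((bwd y).2 ∪ univ.image (bwd y).1).card = m) :
    fwd τ (bwd y).1 (bwd y).2 hT = y := by
  obtain ⟨⟨hh, hbad⟩, hgocc⟩ := hy
  obtain ⟨ρ, h, g⟩ := y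
  simp only at hh hbad hgocc ⊢
  obtain ⟨hhmono, hhpat⟩ := mem_Occ.mp hh
  obtain ⟨hgmono', hgpat⟩ := mem_Occ.mp hgocc
  have hgmono : StrictMono g := fun i j hij => hgmono' i j hij
  have hTg : ((bwd (ρ, h, g)).2 ∪ univ.image (bwd (ρ, h, g)).1) = univ.image g := by
    ext a
    simp only [bwd, Finset.mem_union, Finset.mem_image, Finset.mem_filter, Finset.mem_univ,
      true_and]
    constructor
    · rintro (⟨s, -, rfl⟩ | ⟨i, rfl⟩)
      · exact ⟨s, rfl⟩
      · exact ⟨h i, rfl⟩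
    · rintro ⟨s, rfl⟩
      by_cases hcase : ∃ i, h i = s
      · obtain ⟨i, rfl⟩ := hcase
        exact Or.inr ⟨i, rfl⟩
      · push_neg at hcase
        exact Or.inl ⟨s, hcase, rfl⟩
  have hgemb : g = ((bwd (ρ, h, g)).2 ∪ univ.image (bwd (ρ, h, g)).1).orderEmbOfFin hT :=
    Finset.orderEmbOfFin_unique hT (fun x => by rw [hTg]; exact Finset.mem_image_of_mem g (mem_univ x)) hgmono
  have hcoe : ∀ i : Fin m,
      ((((bwd (ρ, h, g)).2 ∪ univ.image (bwd (ρ, h, g)).1).orderIsoOfFin hT) i : Fin n) = g i := by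
    intro i
    rw [Finset.coe_orderIsoOfFin_apply, ← hgemb]
  refine Prod.ext ?_ (Prod.ext ?_ ?_)
  · apply Equiv.ext
    intro i
    apply Fin.ext
    simp only [fwd]
    refine (patt_apply _ _ i).trans ?_
    have heq : (univ.filter fun j => τ ((((bwd (ρ, h, g)).2 ∪ univ.image (bwd (ρ, h, g)).1).orderIsoOfFin hT) j : Fin n) < τ ((((bwd (ρ, h, g)).2 ∪ univ.image (bwd (ρ, h, g)).1).orderIsoOfFin hT) i : Fin n)) = (univ.filter fun j => ρ j < ρ i) := by
      apply Finset.filter_congr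
      intro j _
      rw [hcoe i, hcoe j, ← hgpat]
    rw [heq, card_filter_lt_perm]
  · funext i
    simp only [fwd]
    rw [OrderIso.symm_apply_eq]
    refine Subtype.ext ?_
    rw [hcoe (h i)]
    rfl
  · funext i
    simp only [fwd]
    exact hcoe i

lemma core_card (σ : Equiv.Perm (Fin k)) (R : Finset (Fin (k + 1) × Fin (k + 1)))
    (τ : Equiv.Perm (Fin n)) (m : ℕ) :
    ((univ : Finset ((Fin k → Fin n) × Finset (Fin n))).filter fun x =>
        (x.1 ∈ Occ σ τ ∧ x.2 ⊆ bad τ x.1 Rᶜ) ∧ x.2.card + k = m).card =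
    ((univ : Finset (Equiv.Perm (Fin m) × (Fin k → Fin m) × (Fin m → Fin n))).filter fun y =>
        (y.2.1 ∈ Occ σ y.1 ∧ bad y.1 y.2.1 R = ∅) ∧ y.2.2 ∈ Occ y.1 τ).card := by
  have Tcard : ∀ x : (Fin k → Fin n) × Finset (Fin n),
      ((x.1 ∈ Occ σ τ ∧ x.2 ⊆ bad τ x.1 Rᶜ) ∧ x.2.card + k = m) →
      (x.2 ∪ univ.image x.1).card = m := by
    rintro ⟨f, S⟩ ⟨⟨hf, hS⟩, hc⟩
    exact T_card (fun i j => fun hij => by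
        by_contra hne
        rcases lt_or_gt_of_ne (fun h : i = j => hne (h ▸ rfl)) with h | h
        · exact absurd hij (ne_of_lt ((mem_Occ.mp hf).1 i j h))
        · exact absurd hij.symm (ne_of_lt ((mem_Occ.mp hf).1 j i h)))
      (fun a ha => (mem_bad.mp (hS ha)).1) hc
  refine Finset.card_bij'
    (fun x hx => fwd τ x.1 x.2 (Tcard x (by simpa using hx)))
    (fun y _ => bwd y) ?_ ?_ ?_ ?_
  · intro x hx
    have hx' := (Finset.mem_filter.mp hx).2
    exact Finset.mem_filter.mpr ⟨mem_univ _, fwd_spec σ R τ _ hx'.1.1 hx'.1.2⟩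
  · intro y hy
    have hy' := (Finset.mem_filter.mp hy).2
    exact Finset.mem_filter.mpr ⟨mem_univ _, bwd_spec σ R τ y hy'⟩
  · intro x hx
    have hx' := (Finset.mem_filter.mp hx).2
    exact bwd_fwd τ _ (fun a ha => (mem_bad.mp (hx'.1.2 ha)).1)
  · intro y hy
    have hy' := (Finset.mem_filter.mp hy).2
    exact fwd_bwd σ R τ y hy' _

lemma main_aux (σ : Equiv.Perm (Fin k)) (R : Finset (Fin (k + 1) × Fin (k + 1)))
    (τ : Equiv.Perm (Fin n)) :
    (meshOcc σ Rᶜ τ : ℤ) =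
      ∑ m ∈ range (n + 1), ∑ ρ : Equiv.Perm (Fin m),
        (-1 : ℤ) ^ (m + k) * (meshOcc σ R ρ : ℤ) * (occ ρ τ : ℤ) := by
  classical
  -- Step A: expand LHS as signed sum over (f, S)
  have stepA : (meshOcc σ Rᶜ τ : ℤ) =
      ∑ f ∈ Occ σ τ, ∑ S ∈ (bad τ f Rᶜ).powerset, (-1 : ℤ) ^ S.card := by
    rw [meshOcc_eq_card', Finset.card_filter]
    push_cast
    refine Finset.sum_congr rfl fun f _ => ?_
    rw [Finset.sum_powerset_neg_one_pow_card]
  -- Step B: as a sum over the product finset T1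
  have stepB : ∑ f ∈ Occ σ τ, ∑ S ∈ (bad τ f Rᶜ).powerset, (-1 : ℤ) ^ S.card =
      ∑ x ∈ (univ : Finset ((Fin k → Fin n) × Finset (Fin n))).filter
        (fun x => x.1 ∈ Occ σ τ ∧ x.2 ⊆ bad τ x.1 Rᶜ), (-1 : ℤ) ^ x.2.card := by
    rw [Finset.sum_finset_product _ (Occ σ τ) (fun f => (bad τ f Rᶜ).powerset)
      (fun p => by simp [Finset.mem_powerset])]
  -- maps-to fact
  have hmap : ∀ x ∈ (univ : Finset ((Fin k → Fin n) × Finset (Fin n))).filter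
      (fun x => x.1 ∈ Occ σ τ ∧ x.2 ⊆ bad τ x.1 Rᶜ), x.2.card + k ∈ range (n + 1) := by
    rintro ⟨f, S⟩ hx
    have hx' := (Finset.mem_filter.mp hx).2
    simp only at hx'
    have hfmono : StrictMono f := fun i j hij => (mem_Occ.mp hx'.1).1 i j hij
    have hcard : (S ∪ univ.image f).card = S.card + k :=
      T_card hfmono.injective (fun a ha => (mem_bad.mp (hx'.2 ha)).1) rfl
    have hle : (S ∪ univ.image f).card ≤ n := by
      have := Finset.card_le_card (Finset.subset_univ (S ∪ univ.image f))
      simpa using this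
    show S.card + k ∈ range (n + 1)
    rw [Finset.mem_range]
    omega
  -- Step C: fiberwise
  have stepC : ∑ x ∈ (univ : Finset ((Fin k → Fin n) × Finset (Fin n))).filter
      (fun x => x.1 ∈ Occ σ τ ∧ x.2 ⊆ bad τ x.1 Rᶜ), (-1 : ℤ) ^ x.2.card =
      ∑ m ∈ range (n + 1), ∑ x ∈ (univ : Finset ((Fin k → Fin n) × Finset (Fin n))).filter
        (fun x => (x.1 ∈ Occ σ τ ∧ x.2 ⊆ bad τ x.1 Rᶜ) ∧ x.2.card + k = m),
        (-1 : ℤ) ^ x.2.card := by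
    rw [← Finset.sum_fiberwise_of_maps_to hmap (fun x => (-1 : ℤ) ^ x.2.card)]
    refine Finset.sum_congr rfl fun m _ => ?_
    rw [Finset.filter_filter]
  rw [stepA, stepB, stepC]
  refine Finset.sum_congr rfl fun m _ => ?_
  -- Step D: constant sign on each fiber
  have stepD : ∑ x ∈ (univ : Finset ((Fin k → Fin n) × Finset (Fin n))).filter
      (fun x => (x.1 ∈ Occ σ τ ∧ x.2 ⊆ bad τ x.1 Rᶜ) ∧ x.2.card + k = m),
      (-1 : ℤ) ^ x.2.card =
      (-1 : ℤ) ^ (m + k) * (((univ : Finset ((Fin k → Fin n) × Finset (Fin n))).filter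
      (fun x => (x.1 ∈ Occ σ τ ∧ x.2 ⊆ bad τ x.1 Rᶜ) ∧ x.2.card + k = m)).card : ℤ) := by
    have hsign : ∀ x ∈ (univ : Finset ((Fin k → Fin n) × Finset (Fin n))).filter
        (fun x => (x.1 ∈ Occ σ τ ∧ x.2 ⊆ bad τ x.1 Rᶜ) ∧ x.2.card + k = m),
        (-1 : ℤ) ^ x.2.card = (-1 : ℤ) ^ (m + k) := by
      intro x hx
      have hx' := (Finset.mem_filter.mp hx).2.2
      have hmk : m + k = x.2.card + 2 * k := by omega
      rw [hmk, pow_add, pow_mul, neg_one_sq, one_pow, mul_one]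
    rw [Finset.sum_congr rfl hsign, Finset.sum_const, nsmul_eq_mul, mul_comm]
  rw [stepD, core_card σ R τ m]
  -- Step E: RHS per m
  have stepE : (((univ : Finset (Equiv.Perm (Fin m) × (Fin k → Fin m) × (Fin m → Fin n))).filter
      (fun y => (y.2.1 ∈ Occ σ y.1 ∧ bad y.1 y.2.1 R = ∅) ∧ y.2.2 ∈ Occ y.1 τ)).card : ℤ) =
      ∑ ρ : Equiv.Perm (Fin m), (meshOcc σ R ρ : ℤ) * (occ ρ τ : ℤ) := by
    have : ((univ : Finset (Equiv.Perm (Fin m) × (Fin k → Fin m) × (Fin m → Fin n))).filter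
        (fun y => (y.2.1 ∈ Occ σ y.1 ∧ bad y.1 y.2.1 R = ∅) ∧ y.2.2 ∈ Occ y.1 τ)).card =
        ∑ ρ ∈ (univ : Finset (Equiv.Perm (Fin m))),
          (((Occ σ ρ).filter fun h => bad ρ h R = ∅) ×ˢ (Occ ρ τ)).card := by
      rw [Finset.card_eq_sum_ones, Finset.sum_finset_product _ univ
        (fun ρ => ((Occ σ ρ).filter fun h => bad ρ h R = ∅) ×ˢ (Occ ρ τ))
        (fun p => by simp [Finset.mem_product, Finset.mem_filter])]
      refine Finset.sum_congr rfl fun ρ _ => ?_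
      rw [← Finset.card_eq_sum_ones]
    rw [this]
    push_cast
    refine Finset.sum_congr rfl fun ρ _ => ?_
    rw [Finset.card_product, meshOcc_eq_card' σ R ρ, occ_eq]
    push_cast
    ring
  rw [stepE, Finset.mul_sum]
  refine Finset.sum_congr rfl fun ρ _ => ?_
  ring
end main

/-- The Reciprocity Theorem for mesh patterns: for a mesh pattern `p = (σ, R)` with
`σ ∈ S_k` and its dual `p* = (σ, Rᶜ)`, for every permutation `τ ∈ S_n`,
`p*(τ) = ∑_ρ (-1)^{|σ|-|ρ|} p(ρ) occ(ρ, τ)` and, equivalently,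
`p(τ) = ∑_ρ (-1)^{|ρ|-|σ|} p*(ρ) occ(ρ, τ)`, the sums being over all classical
patterns `ρ` of each size `m ≤ n` (larger patterns do not occur in `τ`).  The sign
`(-1)^{|σ|-|ρ|} = (-1)^{|ρ|-|σ|}` is written `(-1)^(m+k)`, which agrees with it. -/
theorem mesh_reciprocity {k n : ℕ} (σ : Equiv.Perm (Fin k))
    (R : Finset (Fin (k + 1) × Fin (k + 1))) (τ : Equiv.Perm (Fin n)) :
    ((meshOcc σ Rᶜ τ : ℤ) =
      ∑ m ∈ range (n + 1), ∑ ρ : Equiv.Perm (Fin m),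
        (-1 : ℤ) ^ (m + k) * (meshOcc σ R ρ : ℤ) * (occ ρ τ : ℤ)) ∧
    ((meshOcc σ R τ : ℤ) =
      ∑ m ∈ range (n + 1), ∑ ρ : Equiv.Perm (Fin m),
        (-1 : ℤ) ^ (m + k) * (meshOcc σ Rᶜ ρ : ℤ) * (occ ρ τ : ℤ)) := by
  refine ⟨main_aux σ R τ, ?_⟩
  have := main_aux σ Rᶜ τ
  rwa [compl_compl] at this
end

section
/- The number of descents of any permutation τ equals ∑_{π : π(1) > π(|π|)} (-1)^{|π|} · occ(π, τ), where the sum is over all nonempty permutations π whose first entry exceeds their last entry and occ(π, τ) is the number of occurrences of π as a classical pattern in τ. -/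
open Finset

/-- The number of descents of `τ`: indices `i` with `τ(i) > τ(i+1)`. -/
def des {n : ℕ} (τ : Equiv.Perm (Fin n)) : ℕ :=
  ((range n).filter fun i =>
    if h : i + 1 < n then τ ⟨i + 1, h⟩ < τ ⟨i, by omega⟩ else False).card


lemma strictMono_fin_eq_id {k : ℕ} {f : Fin k → Fin k} (hf : StrictMono f) : f = id := by
  have h : (univ : Finset (Fin k)).card = k := by simp
  have h1 : f = (univ : Finset (Fin k)).orderEmbOfFin h :=
    Finset.orderEmbOfFin_unique h (fun x => mem_univ _) hf
  have h2 : (id : Fin k → Fin k) = (univ : Finset (Fin k)).orderEmbOfFin h :=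
    Finset.orderEmbOfFin_unique h (fun x => mem_univ _) strictMono_id
  rw [h1, h2]

lemma pattern_unique {k n : ℕ} {g : Fin k → Fin n} {σ₁ σ₂ : Equiv.Perm (Fin k)}
    (h1 : ∀ i j, σ₁ i < σ₁ j ↔ g i < g j) (h2 : ∀ i j, σ₂ i < σ₂ j ↔ g i < g j) :
    σ₁ = σ₂ := by
  have hmono : StrictMono (fun x => σ₁ (σ₂.symm x)) := by
    intro x y hxy
    have : g (σ₂.symm x) < g (σ₂.symm y) := by
      rw [← h2]; simpa using hxy
    exact (h1 _ _).2 this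
  have := strictMono_fin_eq_id hmono
  ext i
  have h3 := congrFun this (σ₂ i)
  exact congrArg Fin.val (by simpa using h3)

lemma pattern_exists {k n : ℕ} (g : Fin k → Fin n) (hg : Function.Injective g) :
    ∃ σ : Equiv.Perm (Fin k), ∀ i j, σ i < σ j ↔ g i < g j := by
  set s : Finset (Fin n) := image g univ with hs
  have hcard : s.card = k := by
    rw [hs, card_image_of_injective _ hg, card_univ, Fintype.card_fin]
  let e := s.orderIsoOfFin hcard
  have hmem : ∀ i, g i ∈ s := fun i => mem_image_of_mem g (mem_univ i)
  let p : Fin k → Fin k := fun i => e.symm ⟨g i, hmem i⟩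
  have hp : ∀ i j, p i < p j ↔ g i < g j := by
    intro i j
    exact (e.symm.lt_iff_lt).trans Subtype.mk_lt_mk
  have hpinj : Function.Injective p := by
    intro i j hij
    have h1 : ¬ g i < g j := by rw [← hp]; simp [hij]
    have h2 : ¬ g j < g i := by rw [← hp]; simp [hij]
    exact hg (le_antisymm (not_lt.1 h2) (not_lt.1 h1))
  exact ⟨Equiv.ofBijective p (Finite.injective_iff_bijective.1 hpinj), fun i j => hp i j⟩

lemma stepA {n m : ℕ} (τ : Equiv.Perm (Fin n)) :
    ∑ π : Equiv.Perm (Fin (m+1)),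
      (if π (Fin.last m) < π 0 then (-1:ℤ)^(m+1) * (occ π τ : ℤ) else 0)
    = ∑ f : Fin (m+1) → Fin n,
      if StrictMono f ∧ τ (f (Fin.last m)) < τ (f 0) then (-1:ℤ)^(m+1) else 0 := by
  classical
  have hocc : ∀ π : Equiv.Perm (Fin (m+1)), (occ π τ : ℤ) =
      ∑ f : Fin (m+1) → Fin n,
        if (∀ i j : Fin (m+1), i < j → f i < f j) ∧
           (∀ i j : Fin (m+1), π i < π j ↔ τ (f i) < τ (f j)) then (1:ℤ) else 0 := by
    intro π
    rw [occ, card_filter]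
    push_cast
    rfl
  calc
    ∑ π : Equiv.Perm (Fin (m+1)),
      (if π (Fin.last m) < π 0 then (-1:ℤ)^(m+1) * (occ π τ : ℤ) else 0)
      = ∑ π : Equiv.Perm (Fin (m+1)), ∑ f : Fin (m+1) → Fin n,
        (if (π (Fin.last m) < π 0) ∧
            ((∀ i j : Fin (m+1), i < j → f i < f j) ∧
             (∀ i j : Fin (m+1), π i < π j ↔ τ (f i) < τ (f j)))
         then (-1:ℤ)^(m+1) else 0) := by
      refine sum_congr rfl fun π _ => ?_
      by_cases hC : π (Fin.last m) < π 0
      · rw [if_pos hC, hocc, mul_sum]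
        refine sum_congr rfl fun f _ => ?_
        simp [hC, mul_ite]
      · simp [hC]
    _ = ∑ f : Fin (m+1) → Fin n, ∑ π : Equiv.Perm (Fin (m+1)),
        (if (π (Fin.last m) < π 0) ∧
            ((∀ i j : Fin (m+1), i < j → f i < f j) ∧
             (∀ i j : Fin (m+1), π i < π j ↔ τ (f i) < τ (f j)))
         then (-1:ℤ)^(m+1) else 0) := sum_comm
    _ = _ := by
      refine sum_congr rfl fun f _ => ?_
      by_cases hf : StrictMono f
      · obtain ⟨σ₀, hσ₀⟩ := pattern_exists (fun i => τ (f i))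
          (τ.injective.comp hf.injective)
        have key : ∀ π : Equiv.Perm (Fin (m+1)),
            ((π (Fin.last m) < π 0) ∧
             ((∀ i j : Fin (m+1), i < j → f i < f j) ∧
              (∀ i j : Fin (m+1), π i < π j ↔ τ (f i) < τ (f j))))
            ↔ (π = σ₀ ∧ τ (f (Fin.last m)) < τ (f 0)) := by
          intro π
          constructor
          · rintro ⟨h1, _, h3⟩
            have hπσ : π = σ₀ := pattern_unique h3 hσ₀
            exact ⟨hπσ, (h3 _ _).1 h1⟩
          · rintro ⟨rfl, hc⟩
            exact ⟨(hσ₀ _ _).2 hc, fun i j hij => hf hij, hσ₀⟩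
        calc
          ∑ π : Equiv.Perm (Fin (m+1)),
            (if (π (Fin.last m) < π 0) ∧
                ((∀ i j : Fin (m+1), i < j → f i < f j) ∧
                 (∀ i j : Fin (m+1), π i < π j ↔ τ (f i) < τ (f j)))
             then (-1:ℤ)^(m+1) else 0)
            = ∑ π : Equiv.Perm (Fin (m+1)),
              (if π = σ₀ then (if τ (f (Fin.last m)) < τ (f 0) then (-1:ℤ)^(m+1) else 0) else 0) := by
            refine sum_congr rfl fun π _ => ?_
            rw [if_congr (key π) rfl rfl, ite_and]
          _ = (if τ (f (Fin.last m)) < τ (f 0) then (-1:ℤ)^(m+1) else 0) := by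
            rw [Finset.sum_ite_eq' univ σ₀ (fun _ => _), if_pos (mem_univ _)]
          _ = _ := by simp [hf]
      · have h0 : ∀ π : Equiv.Perm (Fin (m+1)),
            ¬ ((π (Fin.last m) < π 0) ∧
             ((∀ i j : Fin (m+1), i < j → f i < f j) ∧
              (∀ i j : Fin (m+1), π i < π j ↔ τ (f i) < τ (f j)))) := by
          rintro π ⟨_, h2, _⟩
          exact hf fun a b hab => h2 a b hab
        rw [if_neg (fun h => hf h.1)]
        exact sum_eq_zero fun π _ => if_neg (h0 π)

def wfun {n : ℕ} (τ : Equiv.Perm (Fin n)) (S : Finset (Fin n)) : ℤ :=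
  if h : S.Nonempty then
    (if τ (S.max' h) < τ (S.min' h) then (-1:ℤ)^S.card else 0) else 0

lemma image_min' {n m : ℕ} {f : Fin (m+1) → Fin n} (hf : StrictMono f)
    (hne : (image f univ).Nonempty) : (image f univ).min' hne = f 0 := by
  apply le_antisymm
  · exact min'_le _ _ (mem_image_of_mem _ (mem_univ 0))
  · apply le_min'
    intro x hx
    obtain ⟨i, -, rfl⟩ := mem_image.1 hx
    exact hf.monotone (Fin.zero_le i)

lemma image_max' {n m : ℕ} {f : Fin (m+1) → Fin n} (hf : StrictMono f)
    (hne : (image f univ).Nonempty) : (image f univ).max' hne = f (Fin.last m) := by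
  apply le_antisymm
  · apply max'_le
    intro x hx
    obtain ⟨i, -, rfl⟩ := mem_image.1 hx
    exact hf.monotone (Fin.le_last i)
  · exact le_max' _ _ (mem_image_of_mem _ (mem_univ _))

lemma stepB {n m : ℕ} (τ : Equiv.Perm (Fin n)) :
    ∑ f : Fin (m+1) → Fin n,
      (if StrictMono f ∧ τ (f (Fin.last m)) < τ (f 0) then (-1:ℤ)^(m+1) else 0)
    = ∑ S ∈ powersetCard (m+1) (univ : Finset (Fin n)), wfun τ S := by
  classical
  have hcardimg : ∀ f : Fin (m+1) → Fin n, StrictMono f → (image f univ).card = m+1 := by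
    intro f hf
    rw [card_image_of_injective _ hf.injective, card_univ, Fintype.card_fin]
  calc
    ∑ f : Fin (m+1) → Fin n,
      (if StrictMono f ∧ τ (f (Fin.last m)) < τ (f 0) then (-1:ℤ)^(m+1) else 0)
      = ∑ f : Fin (m+1) → Fin n,
        (if StrictMono f then wfun τ (image f univ) else 0) := by
      refine sum_congr rfl fun f _ => ?_
      by_cases hf : StrictMono f
      · have hne : (image f univ).Nonempty := (univ_nonempty).image f
        rw [if_pos hf, wfun, dif_pos hne, image_min' hf hne, image_max' hf hne,
          hcardimg f hf]
        by_cases hc : τ (f (Fin.last m)) < τ (f 0)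
        · rw [if_pos ⟨hf, hc⟩, if_pos hc]
        · rw [if_neg (fun h => hc h.2), if_neg hc]
      · rw [if_neg hf, if_neg (fun h => hf h.1)]
    _ = ∑ f ∈ univ.filter (fun f : Fin (m+1) → Fin n => StrictMono f),
          wfun τ (image f univ) := by
      rw [sum_filter]
    _ = ∑ S ∈ powersetCard (m+1) (univ : Finset (Fin n)), wfun τ S := by
      apply sum_bij (fun f _ => image f univ)
      · intro f hf
        have hf' : StrictMono f := (mem_filter.1 hf).2
        exact mem_powersetCard.2 ⟨subset_univ _, hcardimg f hf'⟩
      · intro f₁ hf₁ f₂ hf₂ h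
        have h1 : StrictMono f₁ := (mem_filter.1 hf₁).2
        have h2 : StrictMono f₂ := (mem_filter.1 hf₂).2
        have e1 := Finset.orderEmbOfFin_unique (hcardimg f₁ h1)
          (fun x => mem_image_of_mem f₁ (mem_univ x)) h1
        have e2 := Finset.orderEmbOfFin_unique (hcardimg f₂ h2)
          (fun x => mem_image_of_mem f₂ (mem_univ x)) h2
        have e3 := Finset.orderEmbOfFin_unique (hcardimg f₁ h1)
          (fun x => by rw [h]; exact Finset.orderEmbOfFin_mem _ _ _)
          ((image f₂ univ).orderEmbOfFin (hcardimg f₂ h2)).strictMono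
        exact e1.trans (e3.symm.trans e2.symm)
      · intro S hS
        have hc : S.card = m + 1 := (mem_powersetCard.1 hS).2
        refine ⟨⇑(S.orderEmbOfFin hc), ?_, ?_⟩
        · exact mem_filter.2 ⟨mem_univ _, (S.orderEmbOfFin hc).strictMono⟩
        · apply coe_injective
          rw [coe_image, coe_univ, Set.image_univ, range_orderEmbOfFin]
      · intro f hf
        rfl

lemma stepC {n : ℕ} (τ : Equiv.Perm (Fin n)) :
    ∑ m ∈ range n, ∑ S ∈ powersetCard (m+1) (univ : Finset (Fin n)), wfun τ S
    = ∑ S ∈ powerset (univ : Finset (Fin n)), wfun τ S := by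
  have h0 : ∑ S ∈ powersetCard 0 (univ : Finset (Fin n)), wfun τ S = 0 := by
    rw [powersetCard_zero, sum_singleton]
    simp [wfun]
  rw [Finset.sum_powerset, card_univ, Fintype.card_fin, sum_range_succ', h0, add_zero]

lemma Ioo_fin_empty_iff {n : ℕ} {a b : Fin n} (hab : a < b) :
    Finset.Ioo a b = ∅ ↔ (b : ℕ) = (a : ℕ) + 1 := by
  constructor
  · intro h
    by_contra hne
    have hlt : (a : ℕ) + 1 < (b : ℕ) := by
      have := (Fin.lt_iff_val_lt_val.1 hab); omega
    have hc : (⟨(a : ℕ) + 1, lt_trans hlt b.isLt⟩ : Fin n) ∈ Finset.Ioo a b := by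
      rw [mem_Ioo]
      constructor
      · rw [Fin.lt_iff_val_lt_val]; simp
      · rw [Fin.lt_iff_val_lt_val]; simpa using hlt
    rw [h] at hc
    exact notMem_empty _ hc
  · intro h
    rw [eq_empty_iff_forall_notMem]
    intro x hx
    rw [mem_Ioo, Fin.lt_iff_val_lt_val, Fin.lt_iff_val_lt_val] at hx
    omega

lemma stepD {n : ℕ} (hn : 0 < n) (τ : Equiv.Perm (Fin n)) :
    ∑ S ∈ powerset (univ : Finset (Fin n)), wfun τ S = (des τ : ℤ) := by
  classical
  haveI : NeZero n := ⟨hn.ne'⟩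
  rw [← Finset.sum_fiberwise (powerset (univ : Finset (Fin n)))
    (fun S => ((WithTop.untopD 0 S.min : Fin n), (WithBot.unbotD 0 S.max : Fin n)))
    (wfun τ)]
  -- characterize fiber membership for nonempty sets
  have hmem : ∀ (S : Finset (Fin n)) (hS : S.Nonempty) (a b : Fin n),
      (WithTop.untopD 0 S.min = a ∧ WithBot.unbotD 0 S.max = b) ↔
      (S.min' hS = a ∧ S.max' hS = b) := by
    intro S hS a b
    rw [← coe_min' hS, ← coe_max' hS, WithTop.untopD_coe, WithBot.unbotD_coe]
  have fiber_eq : ∀ p : Fin n × Fin n,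
      ∑ S ∈ (powerset (univ : Finset (Fin n))).filter
        (fun S => ((WithTop.untopD 0 S.min : Fin n), (WithBot.unbotD 0 S.max : Fin n)) = p),
        wfun τ S
      = if ((p.2 : ℕ) = (p.1 : ℕ) + 1 ∧ τ p.2 < τ p.1) then 1 else 0 := by
    rintro ⟨a, b⟩
    dsimp only
    by_cases hab : a < b ∧ τ b < τ a
    · obtain ⟨hab1, hab2⟩ := hab
      have key : ∀ S ∈ (powerset (univ : Finset (Fin n))).filter
          (fun S => ((WithTop.untopD 0 S.min : Fin n), (WithBot.unbotD 0 S.max : Fin n)) = (a, b)),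
          ∃ hS : S.Nonempty, S.min' hS = a ∧ S.max' hS = b := by
        intro S hS
        have h2 := (mem_filter.1 hS).2
        rw [Prod.mk.injEq] at h2
        rcases S.eq_empty_or_nonempty with rfl | hne
        · exfalso
          rw [Finset.min_empty, Finset.max_empty] at h2
          have ha : (0 : Fin n) = a := h2.1
          have hb : (0 : Fin n) = b := h2.2
          rw [← ha, ← hb] at hab1
          exact lt_irrefl _ hab1
        · exact ⟨hne, (hmem S hne a b).1 h2⟩
      calc
        ∑ S ∈ (powerset (univ : Finset (Fin n))).filter
          (fun S => ((WithTop.untopD 0 S.min : Fin n), (WithBot.unbotD 0 S.max : Fin n)) = (a, b)),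
          wfun τ S
          = ∑ T ∈ powerset (Finset.Ioo a b), (-1:ℤ)^T.card := by
          apply sum_nbij' (i := fun S => S \ {a, b}) (j := fun T => insert a (insert b T))
          · intro S hS
            obtain ⟨hne, hmin, hmax⟩ := key S hS
            rw [mem_powerset]
            intro x hx
            rw [mem_sdiff, mem_insert, mem_singleton] at hx
            push_neg at hx
            obtain ⟨hxS, hxa, hxb⟩ := hx
            rw [mem_Ioo]
            constructor
            · exact lt_of_le_of_ne (hmin ▸ min'_le S x hxS) (Ne.symm hxa)
            · exact lt_of_le_of_ne (hmax ▸ le_max' S x hxS) hxb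
          · intro T hT
            rw [mem_powerset] at hT
            have hmin' : ∀ x ∈ insert a (insert b T), a ≤ x := by
              intro x hx
              rw [mem_insert, mem_insert] at hx
              rcases hx with rfl | rfl | hx
              · exact le_refl x
              · exact le_of_lt hab1
              · exact le_of_lt (mem_Ioo.1 (hT hx)).1
            have hmax' : ∀ x ∈ insert a (insert b T), x ≤ b := by
              intro x hx
              rw [mem_insert, mem_insert] at hx
              rcases hx with rfl | rfl | hx
              · exact le_of_lt hab1
              · exact le_refl x
              · exact le_of_lt (mem_Ioo.1 (hT hx)).2
            have hne : (insert a (insert b T)).Nonempty := insert_nonempty _ _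
            rw [mem_filter]
            refine ⟨mem_powerset.2 (subset_univ _), ?_⟩
            rw [Prod.mk.injEq, hmem _ hne a b]
            constructor
            · exact le_antisymm (min'_le _ _ (mem_insert_self _ _)) (le_min' _ _ _ hmin')
            · exact le_antisymm (max'_le _ _ _ hmax')
                (le_max' _ _ (mem_insert_of_mem (mem_insert_self _ _)))
          · intro S hS
            obtain ⟨hne, hmin, hmax⟩ := key S hS
            have haS : a ∈ S := hmin ▸ min'_mem S hne
            have hbS : b ∈ S := hmax ▸ max'_mem S hne
            ext x
            simp only [mem_insert, mem_sdiff, mem_singleton]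
            constructor
            · rintro (rfl | rfl | ⟨hx, _⟩) <;> assumption
            · intro hx
              by_cases hxa : x = a
              · exact Or.inl hxa
              · by_cases hxb : x = b
                · exact Or.inr (Or.inl hxb)
                · exact Or.inr (Or.inr ⟨hx, by push_neg; exact ⟨hxa, hxb⟩⟩)
          · intro T hT
            rw [mem_powerset] at hT
            have hna : a ∉ T := fun h => absurd (mem_Ioo.1 (hT h)).1 (lt_irrefl a)
            have hnb : b ∉ T := fun h => absurd (mem_Ioo.1 (hT h)).2 (lt_irrefl b)
            ext x
            simp only [mem_sdiff, mem_insert, mem_singleton]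
            constructor
            · rintro ⟨rfl | rfl | hx, h2⟩
              · exact absurd (Or.inl rfl) h2
              · exact absurd (Or.inr rfl) h2
              · exact hx
            · intro hx
              refine ⟨Or.inr (Or.inr hx), ?_⟩
              rintro (rfl | rfl)
              · exact hna hx
              · exact hnb hx
          · intro S hS
            obtain ⟨hne, hmin, hmax⟩ := key S hS
            have haS : a ∈ S := hmin ▸ min'_mem S hne
            have hbS : b ∈ S := hmax ▸ max'_mem S hne
            have hcard : S.card = (S \ {a, b}).card + 2 := by
              have h1 : ({a, b} : Finset (Fin n)) ⊆ S := by
                intro x hx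
                rw [mem_insert, mem_singleton] at hx
                rcases hx with rfl | rfl <;> assumption
              have h2 : ({a, b} : Finset (Fin n)).card = 2 :=
                card_pair (ne_of_lt hab1)
              rw [card_sdiff_of_subset h1, h2]
              have := card_le_card h1
              omega
            rw [wfun, dif_pos hne, hmin, hmax, if_pos hab2, hcard, pow_add]
            norm_num
        _ = if ((b : ℕ) = (a : ℕ) + 1 ∧ τ b < τ a) then 1 else 0 := by
          rw [Finset.sum_powerset_neg_one_pow_card]
          by_cases he : Finset.Ioo a b = ∅
          · rw [if_pos he, if_pos ⟨(Ioo_fin_empty_iff hab1).1 he, hab2⟩]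
          · rw [if_neg he, if_neg]
            rintro ⟨h1, _⟩
            exact he ((Ioo_fin_empty_iff hab1).2 h1)
    · -- fiber sums to zero
      rw [if_neg, ]
      · apply sum_eq_zero
        intro S hS
        rcases S.eq_empty_or_nonempty with rfl | hne
        · simp [wfun]
        · have h2 := (mem_filter.1 hS).2
          rw [Prod.mk.injEq, hmem S hne a b] at h2
          obtain ⟨hmin, hmax⟩ := h2
          rw [wfun, dif_pos hne, hmin, hmax]
          apply if_neg
          intro hc
          apply hab
          refine ⟨lt_of_le_of_ne ?_ ?_, hc⟩
          · exact hmin ▸ hmax ▸ min'_le S _ (max'_mem S hne)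
          · rintro rfl
            exact lt_irrefl _ hc
      · rintro ⟨h1, h2⟩
        apply hab
        refine ⟨?_, h2⟩
        rw [Fin.lt_iff_val_lt_val]
        omega
  rw [sum_congr rfl (fun p _ => fiber_eq p)]
  -- now compute the sum over pairs
  rw [Fintype.sum_prod_type]
  have hdes : (des τ : ℤ) = ∑ i ∈ range n,
      (if (if h : i + 1 < n then τ ⟨i + 1, h⟩ < τ ⟨i, by omega⟩ else False) then (1:ℤ) else 0) := by
    rw [des, card_filter]
    push_cast
    rfl
  rw [hdes, ← Fin.sum_univ_eq_sum_range]
  refine sum_congr rfl fun a _ => ?_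
  by_cases h : (a : ℕ) + 1 < n
  · have hb : ∀ b : Fin n, ((b : ℕ) = (a : ℕ) + 1) ↔ b = ⟨(a : ℕ) + 1, h⟩ := by
      intro b; rw [Fin.ext_iff]
    calc
      ∑ b : Fin n, (if ((b : ℕ) = (a : ℕ) + 1 ∧ τ b < τ a) then (1:ℤ) else 0)
        = ∑ b : Fin n, (if b = ⟨(a : ℕ) + 1, h⟩ then
            (if τ b < τ a then (1:ℤ) else 0) else 0) := by
          refine sum_congr rfl fun b _ => ?_
          rw [if_congr (and_congr_left' (hb b)) rfl rfl, ite_and]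
      _ = (if τ ⟨(a : ℕ) + 1, h⟩ < τ a then (1:ℤ) else 0) := by
          rw [Finset.sum_ite_eq' univ _ (fun b => if τ b < τ a then (1:ℤ) else 0),
            if_pos (mem_univ _)]
      _ = _ := by
          split_ifs with h1 h2 h2 <;> first | rfl | (exfalso; simp_all [Fin.eta])
  · calc
      ∑ b : Fin n, (if ((b : ℕ) = (a : ℕ) + 1 ∧ τ b < τ a) then (1:ℤ) else 0)
        = 0 := by
          apply sum_eq_zero
          intro b _
          apply if_neg
          rintro ⟨h1, _⟩
          exact h (h1 ▸ b.isLt)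
      _ = _ := by
          split_ifs with h1 <;> first | rfl | (exfalso; simp_all)

/-- `des τ = ∑_{π : π(1) > π(|π|)} (-1)^{|π|} occ(π, τ)`, the sum being over all
nonempty permutations `π` whose first entry exceeds the last one.  Patterns longer
than `τ` contribute `0`, so the sum ranges over sizes `m + 1 ∈ [1, n]`. -/
theorem des_expansion (n : ℕ) (τ : Equiv.Perm (Fin n)) :
    (des τ : ℤ) =
      ∑ m ∈ range n, ∑ π : Equiv.Perm (Fin (m + 1)),
        if π (Fin.last m) < π 0 then (-1 : ℤ) ^ (m + 1) * (occ π τ : ℤ) else 0 := by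
  rcases n with _ | n
  · simp [des]
  · have h1 : ∀ m ∈ range (n+1),
        (∑ π : Equiv.Perm (Fin (m + 1)),
          if π (Fin.last m) < π 0 then (-1 : ℤ) ^ (m + 1) * (occ π τ : ℤ) else 0)
        = ∑ S ∈ powersetCard (m+1) (univ : Finset (Fin (n+1))), wfun τ S :=
      fun m _ => (stepA τ).trans (stepB τ)
    rw [sum_congr rfl h1, stepC, stepD (Nat.succ_pos n)]
end

section
/- The number of left-to-right maxima of any permutation τ equals ∑_{π : π(|π|) = 1} (-1)^{|π|-1} · occ(π, τ), where the sum is over all nonempty permutations π ending in their smallest letter and occ(π, τ) is the number of classical occurrences of π in τ. -/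
open Finset

/-- The number of left-to-right maxima of `τ`: positions `j` with `τ(i) < τ(j)`
for all `i < j`. -/
def lmax {n : ℕ} (τ : Equiv.Perm (Fin n)) : ℕ :=
  (univ.filter fun j : Fin n => ∀ i : Fin n, i < j → τ i < τ j).card


lemma perm_eq_of_lt_iff {m : ℕ} (π₁ π₂ : Equiv.Perm (Fin m))
    (h : ∀ i j, π₁ i < π₁ j ↔ π₂ i < π₂ j) : π₁ = π₂ := by
  have hsm : StrictMono (fun a => π₂ (π₁.symm a)) := by
    intro a b hab
    exact (h _ _).mp (by simpa using hab)
  have hid : (fun a => π₂ (π₁.symm a)) = id :=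
    (hsm.range_inj strictMono_id).mp
      (by rw [Set.range_id]; exact (π₂.surjective.comp π₁.symm.surjective).range_eq)
  apply Equiv.ext
  intro x
  have := congrFun hid (π₁ x)
  simpa using this.symm

lemma existsUnique_pattern {m n : ℕ} (g : Fin m → Fin n) (hg : Function.Injective g) :
    ∃! π : Equiv.Perm (Fin m), ∀ i j, π i < π j ↔ g i < g j := by
  have hs : (Finset.image g univ).card = m := by
    rw [Finset.card_image_of_injective _ hg, card_univ, Fintype.card_fin]
  have hmem : ∀ i, g i ∈ Finset.image g univ := fun i => Finset.mem_image_of_mem g (mem_univ i)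
  set e := (Finset.image g univ).orderIsoOfFin hs with he
  have hp : Function.Injective (fun i => e.symm ⟨g i, hmem i⟩) := by
    intro a b hab
    exact hg (Subtype.ext_iff.mp (e.symm.injective hab))
  have hmain : ∀ i j, (Equiv.ofBijective _ ((Finite.injective_iff_bijective).mp hp)) i <
      (Equiv.ofBijective _ ((Finite.injective_iff_bijective).mp hp)) j ↔ g i < g j := by
    intro i j
    show e.symm _ < e.symm _ ↔ _
    rw [e.symm.lt_iff_lt]
    exact Subtype.mk_lt_mk
  exact ⟨_, hmain, fun π' hπ' => perm_eq_of_lt_iff _ _ (fun i j => (hπ' i j).trans (hmain i j).symm)⟩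

/-- Strictly increasing sequences whose last value maps to the minimum of the image under τ. -/
def Mf {n : ℕ} (τ : Equiv.Perm (Fin n)) (m : ℕ) : Finset (Fin (m + 1) → Fin n) :=
  univ.filter fun f => (∀ i j, i < j → f i < f j) ∧
    ∀ i, i ≠ Fin.last m → τ (f (Fin.last m)) < τ (f i)

lemma inner_sum_pattern {n : ℕ} (τ : Equiv.Perm (Fin n)) (m : ℕ) :
    (∑ π : Equiv.Perm (Fin (m + 1)),
        if π (Fin.last m) = 0 then (-1 : ℤ) ^ m * (occ π τ : ℤ) else 0)
      = (-1 : ℤ) ^ m * ((Mf τ m).card : ℤ) := by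
  have key : ∀ f : Fin (m + 1) → Fin n,
      (∑ π : Equiv.Perm (Fin (m + 1)),
        if (π (Fin.last m) = 0 ∧ (∀ i j, i < j → f i < f j) ∧
            (∀ i j, π i < π j ↔ τ (f i) < τ (f j))) then (1 : ℤ) else 0)
      = if ((∀ i j, i < j → f i < f j) ∧
            ∀ i, i ≠ Fin.last m → τ (f (Fin.last m)) < τ (f i)) then 1 else 0 := by
    intro f
    by_cases hf : (∀ i j : Fin (m + 1), i < j → f i < f j) ∧
        ∀ i, i ≠ Fin.last m → τ (f (Fin.last m)) < τ (f i)
    · rw [if_pos hf]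
      obtain ⟨hmono, hlast⟩ := hf
      have hfsm : StrictMono f := fun a b hab => hmono a b hab
      have hginj : Function.Injective (fun i => τ (f i)) :=
        fun a b hab => hfsm.injective (τ.injective hab)
      obtain ⟨π₀, hπ₀, huniq⟩ := existsUnique_pattern _ hginj
      have hπ₀last : π₀ (Fin.last m) = 0 := by
        have hle : ∀ x, π₀ (Fin.last m) ≤ x := by
          intro x
          rcases eq_or_ne (π₀.symm x) (Fin.last m) with hi | hi
          · rw [← π₀.apply_symm_apply x, hi]
          · have : π₀ (Fin.last m) < π₀ (π₀.symm x) :=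
              (hπ₀ _ _).mpr (hlast _ hi)
            rw [π₀.apply_symm_apply] at this
            exact this.le
        exact Fin.le_zero_iff.mp (hle 0)
      rw [Finset.sum_eq_single π₀]
      · rw [if_pos ⟨hπ₀last, hmono, hπ₀⟩]
      · intro π _ hne
        rw [if_neg]
        rintro ⟨-, -, hiff⟩
        exact hne (huniq π hiff)
      · intro h; exact absurd (mem_univ π₀) h
    · rw [if_neg hf]
      apply Finset.sum_eq_zero
      intro π _
      rw [if_neg]
      rintro ⟨hlast0, hmono, hiff⟩
      apply hf
      refine ⟨hmono, fun i hi => ?_⟩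
      have hne : π i ≠ 0 := by
        intro h0
        exact hi (π.injective (h0.trans hlast0.symm))
      have : π (Fin.last m) < π i := by
        rw [hlast0]
        exact Fin.pos_of_ne_zero hne
      exact (hiff _ _).mp this
  have hocc : ∀ π : Equiv.Perm (Fin (m + 1)), (occ π τ : ℤ) =
      ∑ f : Fin (m + 1) → Fin n,
        if ((∀ i j, i < j → f i < f j) ∧ (∀ i j, π i < π j ↔ τ (f i) < τ (f j)))
        then (1 : ℤ) else 0 := by
    intro π
    rw [occ, Finset.sum_boole]
  calc (∑ π : Equiv.Perm (Fin (m + 1)),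
        if π (Fin.last m) = 0 then (-1 : ℤ) ^ m * (occ π τ : ℤ) else 0)
      = ∑ π : Equiv.Perm (Fin (m + 1)), ∑ f : Fin (m + 1) → Fin n,
          (-1 : ℤ) ^ m * (if (π (Fin.last m) = 0 ∧ (∀ i j, i < j → f i < f j) ∧
            (∀ i j, π i < π j ↔ τ (f i) < τ (f j))) then (1 : ℤ) else 0) := by
        refine Finset.sum_congr rfl fun π _ => ?_
        by_cases hc : π (Fin.last m) = 0
        · rw [if_pos hc, hocc π, Finset.mul_sum]
          refine Finset.sum_congr rfl fun f _ => ?_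
          by_cases hP : (∀ i j, i < j → f i < f j) ∧ (∀ i j, π i < π j ↔ τ (f i) < τ (f j))
          · rw [if_pos hP, if_pos ⟨hc, hP⟩]
          · rw [if_neg hP, if_neg (fun h => hP h.2)]
        · rw [if_neg hc]
          symm
          apply Finset.sum_eq_zero
          intro f _
          rw [if_neg (fun h => hc h.1), mul_zero]
    _ = ∑ f : Fin (m + 1) → Fin n, (-1 : ℤ) ^ m *
          ∑ π : Equiv.Perm (Fin (m + 1)),
          (if (π (Fin.last m) = 0 ∧ (∀ i j, i < j → f i < f j) ∧
            (∀ i j, π i < π j ↔ τ (f i) < τ (f j))) then (1 : ℤ) else 0) := by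
        rw [Finset.sum_comm]
        simp only [Finset.mul_sum]
    _ = (-1 : ℤ) ^ m * ((Mf τ m).card : ℤ) := by
        rw [← Finset.mul_sum]
        congr 1
        rw [Finset.sum_congr rfl fun f _ => key f, Mf, Finset.sum_boole]

def Aset {n : ℕ} (τ : Equiv.Perm (Fin n)) (j : Fin n) : Finset (Fin n) :=
  univ.filter fun i => i < j ∧ τ j < τ i

lemma Aset_lt {n : ℕ} {τ : Equiv.Perm (Fin n)} {j i : Fin n} (h : i ∈ Aset τ j) :
    i < j ∧ τ j < τ i := (Finset.mem_filter.mp h).2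

lemma insert_card {n m : ℕ} {τ : Equiv.Perm (Fin n)} {j : Fin n} {T : Finset (Fin n)}
    (hT : T ∈ (Aset τ j).powersetCard m) : (insert j T).card = m + 1 := by
  obtain ⟨hsub, hcard⟩ := Finset.mem_powersetCard.mp hT
  rw [Finset.card_insert_of_notMem fun hj => absurd (Aset_lt (hsub hj)).1 (lt_irrefl j), hcard]

lemma orderEmbOfFin_insert_last {n m : ℕ} (j : Fin n) (T : Finset (Fin n))
    (h : (insert j T).card = m + 1) (hT : ∀ i ∈ T, i < j) :
    (insert j T).orderEmbOfFin h (Fin.last m) = j := by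
  set g := (insert j T).orderEmbOfFin h with hg
  have h1 : ∀ x, g x ∈ insert j T := fun x => Finset.orderEmbOfFin_mem _ h x
  have hjr : j ∈ Set.range g := by
    rw [hg, Finset.range_orderEmbOfFin]
    exact Finset.mem_coe.mpr (Finset.mem_insert_self j T)
  obtain ⟨i, hi⟩ := hjr
  apply le_antisymm
  · rcases Finset.mem_insert.mp (h1 (Fin.last m)) with h' | h'
    · exact le_of_eq h'
    · exact (hT _ h').le
  · rw [← hi]
    exact g.monotone (Fin.le_last i)

lemma card_fiber {n : ℕ} (τ : Equiv.Perm (Fin n)) (m : ℕ) (j : Fin n) :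
    ((Mf τ m).filter fun f => f (Fin.last m) = j).card = ((Aset τ j).powersetCard m).card := by
  refine Finset.card_bij' (fun f _ => Finset.image (fun i : Fin m => f i.castSucc) univ)
    (fun T hT => ⇑((insert j T).orderEmbOfFin (insert_card hT))) ?_ ?_ ?_ ?_
  · intro f hf
    obtain ⟨hfM, hlastj⟩ := Finset.mem_filter.mp hf
    obtain ⟨-, hmono, hlt⟩ := Finset.mem_filter.mp hfM
    have hfsm : StrictMono f := fun a b hab => hmono a b hab
    rw [Finset.mem_powersetCard]
    constructor
    · intro x hx
      obtain ⟨i, -, rfl⟩ := Finset.mem_image.mp hx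
      rw [Aset, Finset.mem_filter]
      refine ⟨mem_univ _, ?_, ?_⟩
      · rw [← hlastj]; exact hfsm (Fin.castSucc_lt_last i)
      · rw [← hlastj]; exact hlt _ (Fin.castSucc_lt_last i).ne
    · rw [Finset.card_image_of_injective _ fun a b hab =>
        Fin.castSucc_injective m (hfsm.injective hab), card_univ, Fintype.card_fin]
  · intro T hT
    obtain ⟨hsub, hcard⟩ := Finset.mem_powersetCard.mp hT
    set g := (insert j T).orderEmbOfFin (insert_card hT) with hg
    have hglast : g (Fin.last m) = j :=
      orderEmbOfFin_insert_last j T (insert_card hT) fun i hi => (Aset_lt (hsub hi)).1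
    have h1 : ∀ x, g x ∈ insert j T := fun x => Finset.orderEmbOfFin_mem _ _ x
    rw [Finset.mem_filter, Mf, Finset.mem_filter]
    refine ⟨⟨mem_univ _, fun a b hab => g.strictMono hab, fun i hi => ?_⟩, hglast⟩
    have hgi : g i ∈ T := by
      rcases Finset.mem_insert.mp (h1 i) with h' | h'
      · exact absurd (g.injective (h'.trans hglast.symm)) hi
      · exact h'
    show τ (g (Fin.last m)) < τ (g i)
    rw [hglast]
    exact (Aset_lt (hsub hgi)).2
  · intro f hf
    obtain ⟨hfM, hlastj⟩ := Finset.mem_filter.mp hf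
    obtain ⟨-, hmono, hlt⟩ := Finset.mem_filter.mp hfM
    have hfsm : StrictMono f := fun a b hab => hmono a b hab
    symm
    apply Finset.orderEmbOfFin_unique _ _ hfsm
    intro x
    rcases eq_or_ne x (Fin.last m) with rfl | hx
    · rw [hlastj]; exact Finset.mem_insert_self _ _
    · obtain ⟨y, rfl⟩ := Fin.exists_castSucc_eq.mpr hx
      exact Finset.mem_insert_of_mem (Finset.mem_image.mpr ⟨y, mem_univ y, rfl⟩)
  · intro T hT
    obtain ⟨hsub, hcard⟩ := Finset.mem_powersetCard.mp hT
    set g := (insert j T).orderEmbOfFin (insert_card hT) with hg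
    have hglast : g (Fin.last m) = j :=
      orderEmbOfFin_insert_last j T (insert_card hT) fun i hi => (Aset_lt (hsub hi)).1
    set X := Finset.image (fun i : Fin m => g i.castSucc) univ with hX
    have himg : Finset.image (⇑g) univ = insert j T := by
      apply Finset.coe_injective
      rw [Finset.coe_image, Finset.coe_univ, Set.image_univ, Finset.range_orderEmbOfFin]
    have hsplit : Finset.image (⇑g) univ = insert j X := by
      ext x
      simp only [Finset.mem_image, Finset.mem_insert, mem_univ, true_and, hX]
      constructor
      · rintro ⟨i, rfl⟩
        rcases eq_or_ne i (Fin.last m) with rfl | hi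
        · exact Or.inl hglast
        · obtain ⟨y, rfl⟩ := Fin.exists_castSucc_eq.mpr hi
          exact Or.inr ⟨y, rfl⟩
      · rintro (rfl | ⟨y, rfl⟩)
        · exact ⟨Fin.last m, hglast⟩
        · exact ⟨y.castSucc, rfl⟩
    have hjX : j ∉ X := by
      intro hj
      obtain ⟨y, -, hy⟩ := Finset.mem_image.mp hj
      have : g y.castSucc < g (Fin.last m) := g.strictMono (Fin.castSucc_lt_last y)
      rw [hy, hglast] at this
      exact lt_irrefl j this
    have hjT : j ∉ T := fun hj => absurd (Aset_lt (hsub hj)).1 (lt_irrefl j)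
    have : insert j X = insert j T := by rw [← hsplit, himg]
    have := congrArg (fun s => Finset.erase s j) this
    simpa [Finset.erase_insert hjX, Finset.erase_insert hjT] using this


/-- `lmax τ = ∑_{π : π(|π|) = 1} (-1)^{|π|-1} occ(π, τ)`, summed over all nonempty
permutations `π` ending in their smallest letter.  Patterns longer than `τ`
contribute `0`, so the sum ranges over sizes `m + 1 ∈ [1, n]`. -/
theorem lmax_expansion (n : ℕ) (τ : Equiv.Perm (Fin n)) :
    (lmax τ : ℤ) =
      ∑ m ∈ range n, ∑ π : Equiv.Perm (Fin (m + 1)),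
        if π (Fin.last m) = 0 then (-1 : ℤ) ^ m * (occ π τ : ℤ) else 0 := by
  symm
  calc (∑ m ∈ range n, ∑ π : Equiv.Perm (Fin (m + 1)),
        if π (Fin.last m) = 0 then (-1 : ℤ) ^ m * (occ π τ : ℤ) else 0)
      = ∑ m ∈ range n, (-1 : ℤ) ^ m * ((Mf τ m).card : ℤ) :=
        Finset.sum_congr rfl fun m _ => inner_sum_pattern τ m
    _ = ∑ m ∈ range n, (-1 : ℤ) ^ m * ∑ j : Fin n, (((Aset τ j).card.choose m : ℕ) : ℤ) := by
        refine Finset.sum_congr rfl fun m _ => ?_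
        congr 1
        rw [Finset.card_eq_sum_card_fiberwise (f := fun f => f (Fin.last m)) (t := univ)
          (fun f _ => mem_univ _)]
        push_cast
        refine Finset.sum_congr rfl fun j _ => ?_
        rw [card_fiber τ m j, Finset.card_powersetCard]
    _ = ∑ j : Fin n, ∑ m ∈ range n, (-1 : ℤ) ^ m * (((Aset τ j).card.choose m : ℕ) : ℤ) := by
        simp only [Finset.mul_sum]
        rw [Finset.sum_comm]
    _ = ∑ j : Fin n, (if (Aset τ j).card = 0 then (1 : ℤ) else 0) := by
        refine Finset.sum_congr rfl fun j _ => ?_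
        have ha : (Aset τ j).card + 1 ≤ n := by
          have hj : j ∉ Aset τ j := fun hj => absurd (Aset_lt hj).1 (lt_irrefl j)
          calc (Aset τ j).card + 1 = (insert j (Aset τ j)).card :=
                (Finset.card_insert_of_notMem hj).symm
            _ ≤ (univ : Finset (Fin n)).card := Finset.card_le_card (subset_univ _)
            _ = n := by rw [card_univ, Fintype.card_fin]
        rw [← Finset.sum_subset (Finset.range_subset_range.mpr ha) (fun x _ hx => by
          rw [Nat.choose_eq_zero_of_lt (by simpa using hx), Nat.cast_zero, mul_zero])]
        exact Int.alternating_sum_range_choose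
    _ = (lmax τ : ℤ) := by
        rw [lmax, ← Finset.sum_boole]
        refine Finset.sum_congr rfl fun j _ => ?_
        have hiff : (Aset τ j).card = 0 ↔ ∀ i : Fin n, i < j → τ i < τ j := by
          rw [Finset.card_eq_zero, Aset, Finset.filter_eq_empty_iff]
          constructor
          · intro h i hij
            have := h (mem_univ i)
            push_neg at this
            have hne : τ i ≠ τ j := fun he => absurd (τ.injective he) hij.ne
            exact lt_of_le_of_ne (this hij) hne
          · intro h i _
            rintro ⟨hij, hji⟩
            exact absurd (h i hij) (not_lt.mpr hji.le)
        simp only [hiff]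
end
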